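/- arXiv:0811.3093 — 3 statements merged into one kernel-verified Lean document; each statement's English description precedes it below -/
import Mathlib

section
/- (Agler–Young) If A and B are cyclic matrices in the spectral ball Ω_n, then l_{Ω_n}(A,B) = l_{G_n}(σ(A), σ(B)). -/
open Metric Set Polynomial

noncomputable section

/-- `sigmaMap n A` is `(σ₁(A), …, σₙ(A))` where
`det (t•I - A) = tⁿ + ∑_{j=1}^n (-1)^j σ_j(A) t^{n-j}`;
the `j`-th coordinate (for `j : Fin n`, representing the index `j+1 ∈ {1,…,n}`)
is `(-1)^(j+1) * (coefficient of t^(n-(j+1)) in the characteristic polynomial)`. -/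
def sigmaMap (n : ℕ) (A : Matrix (Fin n) (Fin n) ℂ) : Fin n → ℂ :=
  fun j => (-1 : ℂ) ^ (j.val + 1) * A.charpoly.coeff (n - (j.val + 1))

/-- The spectral ball `Ω_n`: matrices whose eigenvalues all have modulus `< 1`. -/
def specBall (n : ℕ) : Set (Matrix (Fin n) (Fin n) ℂ) :=
  {A | ∀ μ ∈ A.charpoly.roots, ‖μ‖ < 1}

/-- The symmetrized polydisc `G_n = σ(Ω_n)`. -/
def symPolydisc (n : ℕ) : Set (Fin n → ℂ) := sigmaMap n '' specBall n

/-- The Lempert function of a subset `D ⊆ ℂⁿ`. -/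
def lempertG (n : ℕ) (D : Set (Fin n → ℂ)) (z w : Fin n → ℂ) : ℝ :=
  sInf {r : ℝ | ∃ α : ℂ, ‖α‖ = r ∧ ‖α‖ < 1 ∧
    ∃ φ : ℂ → (Fin n → ℂ),
      (∀ i, DifferentiableOn ℂ (fun ζ => φ ζ i) (ball (0:ℂ) 1)) ∧
      MapsTo φ (ball (0:ℂ) 1) D ∧ φ 0 = z ∧ φ α = w}

/-- The Lempert function of a set of matrices. -/
def lempertM (n : ℕ) (D : Set (Matrix (Fin n) (Fin n) ℂ))
    (z w : Matrix (Fin n) (Fin n) ℂ) : ℝ :=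
  sInf {r : ℝ | ∃ α : ℂ, ‖α‖ = r ∧ ‖α‖ < 1 ∧
    ∃ φ : ℂ → Matrix (Fin n) (Fin n) ℂ,
      (∀ i j, DifferentiableOn ℂ (fun ζ => φ ζ i j) (ball (0:ℂ) 1)) ∧
      MapsTo φ (ball (0:ℂ) 1) D ∧ φ 0 = z ∧ φ α = w}

/-- A matrix is cyclic (non-derogatory) iff its minimal polynomial equals its
characteristic polynomial. -/
def IsCyclicMat {n : ℕ} (A : Matrix (Fin n) (Fin n) ℂ) : Prop :=
  minpoly ℂ A = A.charpoly

namespace AglerYoung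
open Matrix


lemma diffOn_prod {ι : Type*} (s : Finset ι) (f : ι → ℂ → ℂ) (U : Set ℂ)
    (h : ∀ i ∈ s, DifferentiableOn ℂ (f i) U) :
    DifferentiableOn ℂ (fun ζ => ∏ i ∈ s, f i ζ) U := by
  classical
  induction s using Finset.induction_on with
  | empty => simp only [Finset.prod_empty]; exact differentiableOn_const _
  | @insert a s ha ih =>
      simp only [Finset.prod_insert ha]
      exact (h a (Finset.mem_insert_self a s)).mul
        (ih fun i hi => h i (Finset.mem_insert_of_mem hi))

lemma diffOn_det {m : ℕ} (F : ℂ → Matrix (Fin m) (Fin m) ℂ) (U : Set ℂ)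
    (h : ∀ i j, DifferentiableOn ℂ (fun ζ => F ζ i j) U) :
    DifferentiableOn ℂ (fun ζ => (F ζ).det) U := by
  simp only [Matrix.det_apply']
  apply DifferentiableOn.fun_sum
  intro σ _
  exact DifferentiableOn.const_mul
    (diffOn_prod Finset.univ (fun i ζ => F ζ (σ i) i) U (fun i _ => h (σ i) i)) _

lemma eval_charpoly_eq {m : ℕ} (M : Matrix (Fin m) (Fin m) ℂ) (t : ℂ) :
    M.charpoly.eval t = (t • (1 : Matrix (Fin m) (Fin m) ℂ) - M).det := by
  rw [Matrix.charpoly]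
  have h0 : (M.charmatrix.det).eval t = (Polynomial.evalRingHom t) M.charmatrix.det := rfl
  rw [h0, RingHom.map_det]
  congr 1
  ext i j
  by_cases hij : i = j
  · subst hij
    simp [Matrix.charmatrix_apply_eq, Matrix.one_apply]
  · simp [Matrix.charmatrix_apply_ne _ _ _ hij, Matrix.one_apply, hij]

lemma diffOn_charpoly_coeff {m : ℕ} (F : ℂ → Matrix (Fin m) (Fin m) ℂ) (U : Set ℂ)
    (h : ∀ i j, DifferentiableOn ℂ (fun ζ => F ζ i j) U) (k : ℕ) :
    DifferentiableOn ℂ (fun ζ => (F ζ).charpoly.coeff k) U := by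
  have hinj : Set.InjOn (fun i : Fin (m+1) => ((i : ℕ) : ℂ)) (Finset.univ : Finset (Fin (m+1))) := by
    intro a _ b _ hab
    exact Fin.val_injective (Nat.cast_injective hab)
  have key : (fun ζ => (F ζ).charpoly.coeff k) = fun ζ =>
      ∑ i : Fin (m+1), (F ζ).charpoly.eval ((i : ℕ) : ℂ) *
        (Lagrange.basis Finset.univ (fun i : Fin (m+1) => ((i : ℕ) : ℂ)) i).coeff k := by
    funext ζ
    have hdeg : (F ζ).charpoly.degree < (Finset.univ : Finset (Fin (m+1))).card := by
      rw [Matrix.charpoly_degree_eq_dim, Fintype.card_fin, Finset.card_univ, Fintype.card_fin]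
      exact_mod_cast Nat.lt_succ_self m
    conv_lhs => rw [Lagrange.eq_interpolate hinj hdeg]
    rw [Lagrange.interpolate_apply, finset_sum_coeff]
    simp [coeff_C_mul]
  rw [key]
  apply DifferentiableOn.fun_sum
  intro i _
  apply DifferentiableOn.mul_const
  have : (fun ζ => (F ζ).charpoly.eval ((i : ℕ) : ℂ)) =
      fun ζ => (((i : ℕ) : ℂ) • (1 : Matrix (Fin m) (Fin m) ℂ) - F ζ).det := by
    funext ζ; exact eval_charpoly_eq _ _
  rw [this]
  apply diffOn_det
  intro a b
  apply DifferentiableOn.sub (differentiableOn_const _) (h a b)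

lemma diffOn_mul_entries {m : ℕ} (F G : ℂ → Matrix (Fin m) (Fin m) ℂ) (U : Set ℂ)
    (hF : ∀ i j, DifferentiableOn ℂ (fun ζ => F ζ i j) U)
    (hG : ∀ i j, DifferentiableOn ℂ (fun ζ => G ζ i j) U) :
    ∀ i j, DifferentiableOn ℂ (fun ζ => (F ζ * G ζ) i j) U := by
  intro i j
  simp only [Matrix.mul_apply]
  exact DifferentiableOn.fun_sum fun l _ => (hF i l).mul (hG l j)

lemma diffOn_inv_entries {m : ℕ} (F : ℂ → Matrix (Fin m) (Fin m) ℂ) (U : Set ℂ)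
    (hF : ∀ i j, DifferentiableOn ℂ (fun ζ => F ζ i j) U)
    (hU : ∀ ζ ∈ U, IsUnit (F ζ).det) :
    ∀ i j, DifferentiableOn ℂ (fun ζ => (F ζ)⁻¹ i j) U := by
  intro i j
  have hadj : DifferentiableOn ℂ (fun ζ => (F ζ).adjugate i j) U := by
    simp only [Matrix.adjugate_apply]
    apply diffOn_det
    intro a b
    by_cases hab : a = j
    · subst hab; simp only [Matrix.updateRow_self]
      exact differentiableOn_const _
    · simp only [Matrix.updateRow_ne hab]
      exact hF a b
  have hdet : DifferentiableOn ℂ (fun ζ => (F ζ).det) U := diffOn_det F U hF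
  apply DifferentiableOn.congr (f := fun ζ => (F ζ).adjugate i j / (F ζ).det)
  · exact hadj.div hdet (fun ζ hζ => (hU ζ hζ).ne_zero)
  · intro ζ hζ
    rw [Matrix.inv_def, Matrix.smul_apply, Ring.inverse_eq_inv, smul_eq_mul, div_eq_mul_inv,
      mul_comm]



/-- The companion matrix of `X^m + ∑ a k X^k`. -/
def compMat (m : ℕ) (a : Fin m → ℂ) : Matrix (Fin m) (Fin m) ℂ :=
  Matrix.of fun i j => if (j : ℕ) + 1 = m then -a i else if (i : ℕ) = (j : ℕ) + 1 then 1 else 0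

/-- The monic polynomial with coefficient tuple `a`. -/
def pOf (m : ℕ) (a : Fin m → ℂ) : ℂ[X] :=
  X ^ m + ∑ k : Fin m, C (a k) * X ^ (k : ℕ)

lemma degree_sum_lt (m : ℕ) (a : Fin m → ℂ) (hm : 0 < m) :
    (∑ k : Fin m, C (a k) * X ^ (k : ℕ)).degree < (m : WithBot ℕ) := by
  apply lt_of_le_of_lt (degree_sum_le _ _)
  rw [Finset.sup_lt_iff (by exact_mod_cast WithBot.bot_lt_coe m)]
  intro k _
  apply lt_of_le_of_lt (degree_C_mul_X_pow_le _ _)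
  exact_mod_cast k.isLt

lemma pOf_monic (m : ℕ) (a : Fin m → ℂ) (hm : 0 < m) : (pOf m a).Monic :=
  monic_X_pow_add (degree_sum_lt m a hm)

lemma pOf_natDegree (m : ℕ) (a : Fin m → ℂ) (hm : 0 < m) : (pOf m a).natDegree = m := by
  have : (pOf m a).degree = m := by
    rw [pOf, degree_add_eq_left_of_degree_lt]
    · exact degree_X_pow m
    · rw [degree_X_pow]; exact degree_sum_lt m a hm
  exact natDegree_eq_of_degree_eq_some this

lemma sum_C_mul_X_pow_coeff {m : ℕ} (a : Fin m → ℂ) (k : Fin m) :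
    (∑ i : Fin m, C (a i) * X ^ (i : ℕ)).coeff (k : ℕ) = a k := by
  rw [finset_sum_coeff]
  rw [Finset.sum_eq_single k]
  · simp [coeff_C_mul, coeff_X_pow]
  · intro i _ hik
    simp only [coeff_C_mul, coeff_X_pow]
    rw [if_neg (fun h => hik (Fin.val_injective h.symm))]
    ring
  · intro h; exact absurd (Finset.mem_univ k) h

lemma pOf_coeff {m : ℕ} (a : Fin m → ℂ) (k : Fin m) :
    (pOf m a).coeff (k : ℕ) = a k := by
  rw [pOf, coeff_add, coeff_X_pow, if_neg (Nat.ne_of_lt k.isLt),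
    sum_C_mul_X_pow_coeff, zero_add]

lemma charpoly_compMat_of_monic (p : ℂ[X]) (hp : p.Monic) (h0 : 0 < p.natDegree) :
    (compMat p.natDegree (fun k => p.coeff (k : ℕ))).charpoly = p := by
  have hM : compMat p.natDegree (fun k => p.coeff (k : ℕ))
      = Algebra.leftMulMatrix (AdjoinRoot.powerBasis' hp).basis
          (AdjoinRoot.powerBasis' hp).gen := by
    ext i j
    erw [Algebra.leftMulMatrix_eq_repr_mul]
    have hbj : (AdjoinRoot.powerBasis' hp).basis j = AdjoinRoot.root p ^ (j : ℕ) :=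
      (AdjoinRoot.powerBasis' hp).basis_eq_pow j
    rw [AdjoinRoot.powerBasis'_gen, hbj, ← pow_succ']
    have hroot : AdjoinRoot.root p ^ ((j : ℕ) + 1) = AdjoinRoot.mk p (X ^ ((j : ℕ) + 1)) := by
      rw [← AdjoinRoot.mk_X, ← map_pow]
    rw [hroot]
    have hrepr : ((AdjoinRoot.powerBasis' hp).basis.repr
        (AdjoinRoot.mk p (X ^ ((j : ℕ) + 1)))) i
        = ((X ^ ((j : ℕ) + 1)) %ₘ p).coeff (i : ℕ) := by
      have := AdjoinRoot.powerBasisAux'_repr_apply_to_fun hp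
        (AdjoinRoot.mk p (X ^ ((j : ℕ) + 1))) i
      rw [AdjoinRoot.modByMonicHom_mk] at this
      exact this
    rw [hrepr]
    by_cases hj : (j : ℕ) + 1 = p.natDegree
    · have hmod : X ^ p.natDegree %ₘ p = X ^ p.natDegree - p := by
        have hdvd : p ∣ X ^ p.natDegree - (X ^ p.natDegree - p) := by
          rw [sub_sub_cancel]
        rw [Polynomial.modByMonic_eq_of_dvd_sub hp hdvd]
        rw [(Polynomial.modByMonic_eq_self_iff hp).2]
        have hdd : (X ^ p.natDegree : ℂ[X]).degree = p.degree := by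
          rw [degree_X_pow, (degree_eq_natDegree hp.ne_zero)]
        have := Polynomial.degree_sub_lt hdd (pow_ne_zero _ X_ne_zero)
          (by rw [leadingCoeff_X_pow, hp.leadingCoeff])
        rwa [hdd] at this
      rw [hj, hmod, coeff_sub, coeff_X_pow, if_neg (Nat.ne_of_lt i.isLt)]
      simp [compMat, hj]
    · have hlt : (j : ℕ) + 1 < p.natDegree := lt_of_le_of_ne j.isLt hj
      rw [(Polynomial.modByMonic_eq_self_iff hp).2
        (by rw [degree_X_pow, degree_eq_natDegree hp.ne_zero]; exact_mod_cast hlt)]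
      rw [coeff_X_pow]
      simp [compMat, hj]
  erw [hM, charpoly_leftMulMatrix, AdjoinRoot.powerBasis'_gen,
    AdjoinRoot.minpoly_root hp.ne_zero, hp.leadingCoeff, inv_one, _root_.map_one, mul_one]

lemma charpoly_compMat {m : ℕ} (hm : 0 < m) (a : Fin m → ℂ) :
    (compMat m a).charpoly = pOf m a := by
  have hd : (pOf m a).natDegree = m := pOf_natDegree m a hm
  have h1 := charpoly_compMat_of_monic (pOf m a) (pOf_monic m a hm) (by rw [hd]; exact hm)
  have hre : Matrix.reindex (finCongr hd) (finCongr hd) (compMat (pOf m a).natDegree (fun k => (pOf m a).coeff (k : ℕ)))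
      = compMat m a := by
    ext i j
    simp only [Matrix.reindex_apply, Matrix.submatrix_apply, compMat, Matrix.of_apply]
    have hi : (((finCongr hd).symm i : Fin (pOf m a).natDegree) : ℕ) = (i : ℕ) := rfl
    have hj : (((finCongr hd).symm j : Fin (pOf m a).natDegree) : ℕ) = (j : ℕ) := rfl
    rw [hi, hj, hd]
    by_cases hcase : (j : ℕ) + 1 = m
    · rw [if_pos hcase, if_pos hcase]
      have : (pOf m a).coeff ((i : ℕ)) = a i := pOf_coeff a i
      rw [this]
    · rw [if_neg hcase, if_neg hcase]
  rw [← hre, Matrix.charpoly_reindex, h1]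


lemma sum_smul_mulVec {n : ℕ} {ι : Type*} (s : Finset ι) (c : ι → ℂ)
    (M : ι → Matrix (Fin n) (Fin n) ℂ) (v : Fin n → ℂ) :
    (∑ k ∈ s, c k • M k) *ᵥ v = ∑ k ∈ s, c k • (M k *ᵥ v) := by
  classical
  induction s using Finset.induction_on with
  | empty => simp [Matrix.zero_mulVec]
  | @insert a t ha ih =>
      simp [Finset.sum_insert ha, Matrix.add_mulVec, Matrix.smul_mulVec, ih]

lemma aeval_sum_C_mul_X_pow {n : ℕ} (A : Matrix (Fin n) (Fin n) ℂ) (x : Fin n → ℂ) :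
    aeval A (∑ k : Fin n, C (x k) * X ^ (k : ℕ)) = ∑ k : Fin n, x k • A ^ (k : ℕ) := by
  rw [map_sum]
  congr 1; funext k
  rw [_root_.map_mul, aeval_C, map_pow, aeval_X, Algebra.algebraMap_eq_smul_one, smul_mul_assoc,
    one_mul]

lemma exists_similar_comp {n : ℕ} (hn : 0 < n) (A : Matrix (Fin n) (Fin n) ℂ)
    (hAc : minpoly ℂ A = A.charpoly) :
    ∃ P : Matrix (Fin n) (Fin n) ℂ, IsUnit P.det ∧
      A * P = P * compMat n (fun k => A.charpoly.coeff (k : ℕ)) := by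
  classical
  set p := A.charpoly with hpdef
  have hpm : p.Monic := Matrix.charpoly_monic A
  have hpd : p.natDegree = n := by
    rw [hpdef, Matrix.charpoly_natDegree_eq_dim, Fintype.card_fin]
  have hp0 : p ≠ 0 := hpm.ne_zero
  set s : Finset (Subspace ℂ (Fin n → ℂ)) := p.roots.toFinset.image
    (fun lam => LinearMap.ker (Matrix.mulVecLin (aeval A (p /ₘ (X - C lam))))) with hsdef
  have hq_ne : ∀ lam ∈ p.roots, (p /ₘ (X - C lam)) ≠ 0 ∧ (p /ₘ (X - C lam)).natDegree = n - 1 := by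
    intro lam hlam
    have hroot : p.IsRoot lam := (mem_roots'.1 hlam).2
    have hfac : (X - C lam) * (p /ₘ (X - C lam)) = p := mul_divByMonic_eq_iff_isRoot.2 hroot
    have hq0 : (p /ₘ (X - C lam)) ≠ 0 := by
      intro h; rw [h, mul_zero] at hfac; exact hp0 hfac.symm
    refine ⟨hq0, ?_⟩
    have hnd := natDegree_mul (X_sub_C_ne_zero lam) hq0
    rw [hfac, natDegree_X_sub_C, hpd] at hnd
    omega
  have htop : ⊤ ∉ s := by
    intro hmem
    rw [hsdef, Finset.mem_image] at hmem
    obtain ⟨lam, hlam, hker⟩ := hmem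
    rw [Multiset.mem_toFinset] at hlam
    obtain ⟨hq0, hqd⟩ := hq_ne lam hlam
    have hzero : aeval A (p /ₘ (X - C lam)) = 0 := by
      have h1 : Matrix.mulVecLin (aeval A (p /ₘ (X - C lam))) = 0 := by
        rw [← LinearMap.ker_eq_top]; exact hker
      ext i j
      have h2 := congrFun (congrArg
        (fun (f : (Fin n → ℂ) →ₗ[ℂ] (Fin n → ℂ)) => f (Pi.single j 1)) h1) i
      simpa [Matrix.mulVecLin_apply, Matrix.mulVec_single] using h2
    have hdvd := minpoly.dvd ℂ A hzero
    rw [hAc] at hdvd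
    have hle := natDegree_le_of_dvd hdvd hq0
    rw [hqd, hpd] at hle
    omega
  obtain ⟨v, hv⟩ := (Set.ne_univ_iff_exists_notMem _).1
    (Subspace.biUnion_ne_univ_of_top_notMem htop)
  have key : ∀ q : ℂ[X], q ≠ 0 → q.natDegree < n → (aeval A q) *ᵥ v ≠ 0 := by
    intro q hq0 hqd hqv
    set g := EuclideanDomain.gcd q p with hgdef
    have hgq : g ∣ q := EuclideanDomain.gcd_dvd_left q p
    have hgp : g ∣ p := EuclideanDomain.gcd_dvd_right q p
    have hg0 : g ≠ 0 := by
      intro h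
      exact hq0 ((EuclideanDomain.gcd_eq_zero_iff.1 h)).1
    have hgv : (aeval A g) *ᵥ v = 0 := by
      have hap : aeval A p = 0 := by rw [hpdef]; exact Matrix.aeval_self_charpoly A
      have hcomb : (EuclideanDomain.gcdA q p) * q + (EuclideanDomain.gcdB q p) * p = g := by
        rw [hgdef, EuclideanDomain.gcd_eq_gcd_ab]; ring
      rw [← hcomb, map_add, _root_.map_mul, _root_.map_mul, Matrix.add_mulVec, ← Matrix.mulVec_mulVec,
        ← Matrix.mulVec_mulVec, hqv, Matrix.mulVec_zero, hap,
        Matrix.zero_mulVec, Matrix.mulVec_zero, add_zero]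
    obtain ⟨h1, hh1⟩ := hgp
    have hh1ne : h1 ≠ 0 := by
      intro h; rw [h, mul_zero] at hh1; exact hp0 hh1
    have hdg : g.natDegree < n := lt_of_le_of_lt (natDegree_le_of_dvd hgq hq0) hqd
    have hdh : 0 < h1.natDegree := by
      have hnd := natDegree_mul hg0 hh1ne
      rw [← hh1, hpd] at hnd
      omega
    obtain ⟨lam, hlam⟩ := Complex.exists_root (natDegree_pos_iff_degree_pos.1 hdh)
    have hlamp : p.IsRoot lam := by
      have : p.eval lam = 0 := by rw [hh1, eval_mul, hlam, mul_zero]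
      exact this
    have hlam_mem : lam ∈ p.roots.toFinset :=
      Multiset.mem_toFinset.2 (mem_roots'.2 ⟨hp0, hlamp⟩)
    have hfac : (X - C lam) * (p /ₘ (X - C lam)) = p := mul_divByMonic_eq_iff_isRoot.2 hlamp
    obtain ⟨h2, hh2⟩ := (dvd_iff_isRoot.2 hlam : (X - C lam) ∣ h1)
    have hq_eq : (p /ₘ (X - C lam)) = g * h2 := by
      have hmm : (X - C lam) * (p /ₘ (X - C lam)) = (X - C lam) * (g * h2) := by
        rw [hfac, hh1, hh2]; ring
      exact mul_left_cancel₀ (X_sub_C_ne_zero lam) hmm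
    have hvk : (aeval A (p /ₘ (X - C lam))) *ᵥ v = 0 := by
      rw [hq_eq, mul_comm, _root_.map_mul, ← Matrix.mulVec_mulVec, hgv, Matrix.mulVec_zero]
    apply hv
    refine Set.mem_iUnion₂.2 ⟨LinearMap.ker (Matrix.mulVecLin (aeval A (p /ₘ (X - C lam)))),
      ?_, ?_⟩
    · rw [hsdef, Finset.mem_image]; exact ⟨lam, hlam_mem, rfl⟩
    · show v ∈ LinearMap.ker (Matrix.mulVecLin (aeval A (p /ₘ (X - C lam))))
      rw [LinearMap.mem_ker]
      simpa [Matrix.mulVecLin_apply] using hvk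
  set P : Matrix (Fin n) (Fin n) ℂ := Matrix.of (fun i k => ((A ^ (k : ℕ)) *ᵥ v) i) with hPdef
  have hPmul : ∀ x : Fin n → ℂ,
      P *ᵥ x = (aeval A (∑ k : Fin n, C (x k) * X ^ (k : ℕ))) *ᵥ v := by
    intro x
    rw [aeval_sum_C_mul_X_pow, sum_smul_mulVec]
    ext i
    simp only [Matrix.mulVec, dotProduct, hPdef, Matrix.of_apply, Finset.sum_apply,
      Pi.smul_apply, smul_eq_mul]
    exact Finset.sum_congr rfl (fun k _ => mul_comm _ _)
  have hPunit : IsUnit P := by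
    rw [← Matrix.mulVec_injective_iff_isUnit]
    intro x y hxy
    by_contra hne
    have hsub : P *ᵥ (x - y) = 0 := by rw [Matrix.mulVec_sub, hxy, sub_self]
    set q := ∑ k : Fin n, C ((x - y) k) * X ^ (k : ℕ) with hqdef
    have hq0 : q ≠ 0 := by
      have hxyne : x - y ≠ 0 := sub_ne_zero.2 hne
      obtain ⟨k, hk⟩ := Function.ne_iff.1 hxyne
      intro h
      have hco := sum_C_mul_X_pow_coeff (x - y) k
      rw [← hqdef, h, coeff_zero] at hco
      exact hk (by rw [← hco]; rfl)
    have hqd : q.natDegree < n := by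
      rw [natDegree_lt_iff_degree_lt hq0]
      exact degree_sum_lt n (x - y) hn
    exact key q hq0 hqd (by rw [← hPmul]; exact hsub)
  refine ⟨P, (Matrix.isUnit_iff_isUnit_det P).1 hPunit, ?_⟩
  ext i j
  rw [Matrix.mul_apply, Matrix.mul_apply]
  have hL : ∑ k, A i k * P k j = ((A ^ ((j : ℕ) + 1)) *ᵥ v) i := by
    have h1 : ∑ k, A i k * P k j = (A *ᵥ fun k => P k j) i := rfl
    have hcol : (fun k => P k j) = (A ^ (j : ℕ)) *ᵥ v := rfl
    rw [h1, hcol, Matrix.mulVec_mulVec, ← pow_succ']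
  rw [hL]
  by_cases hj : (j : ℕ) + 1 = n
  · have hCH : (A ^ n) *ᵥ v = -∑ k : Fin n, p.coeff (k : ℕ) • ((A ^ (k : ℕ)) *ᵥ v) := by
      have h0 : aeval A p = 0 := by rw [hpdef]; exact Matrix.aeval_self_charpoly A
      have hsum' : p = X ^ n + ∑ k : Fin n, C (p.coeff (k : ℕ)) * X ^ (k : ℕ) := by
        conv_lhs => rw [hpm.as_sum]
        rw [hpd, Finset.sum_range (fun i => C (p.coeff i) * X ^ i)]
      rw [hsum', map_add, map_pow, aeval_X, aeval_sum_C_mul_X_pow] at h0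
      have h2 : A ^ n = -∑ k : Fin n, p.coeff (k : ℕ) • A ^ (k : ℕ) :=
        eq_neg_of_add_eq_zero_left h0
      rw [h2, Matrix.neg_mulVec, sum_smul_mulVec]
    rw [hj, hCH]
    simp only [compMat, Matrix.of_apply, if_pos hj, Pi.neg_apply, Finset.sum_apply,
      Pi.smul_apply, smul_eq_mul, mul_neg, ← Finset.sum_neg_distrib]
    exact Finset.sum_congr rfl (fun k _ => by
      show -(p.coeff (k : ℕ) * ((A ^ (k : ℕ)) *ᵥ v) i) = -(P i k * p.coeff (k : ℕ))
      have : P i k = ((A ^ (k : ℕ)) *ᵥ v) i := rfl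
      rw [this]; ring)
  · have hlt : (j : ℕ) + 1 < n := lt_of_le_of_ne (Nat.succ_le_of_lt j.isLt) hj
    have hR : ∑ k, P i k * (compMat n (fun k => A.charpoly.coeff (k : ℕ))) k j
        = P i ⟨(j : ℕ) + 1, hlt⟩ := by
      rw [Finset.sum_eq_single (⟨(j : ℕ) + 1, hlt⟩ : Fin n)]
      · simp [compMat, hj]
      · intro k _ hk
        have hkv : (k : ℕ) ≠ (j : ℕ) + 1 := fun h => hk (Fin.ext h)
        simp [compMat, hj, hkv]
      · intro h; exact absurd (Finset.mem_univ _) h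
    rw [hR]
    rfl

lemma charpoly_conj {m : ℕ} (N Cm : Matrix (Fin m) (Fin m) ℂ) (hN : IsUnit N.det) :
    (N * Cm * N⁻¹).charpoly = Cm.charpoly := by
  have hinv : N * N⁻¹ = 1 := Matrix.mul_nonsing_inv N hN
  have hmap1 : (N.map (C : ℂ →+* ℂ[X])) * ((N⁻¹).map (C : ℂ →+* ℂ[X])) = 1 := by
    rw [← Matrix.map_mul, hinv]
    exact Matrix.map_one _ (map_zero _) (_root_.map_one _)
  have hch : Matrix.charmatrix (N * Cm * N⁻¹)
      = (N.map (C : ℂ →+* ℂ[X])) * Matrix.charmatrix Cm * ((N⁻¹).map (C : ℂ →+* ℂ[X])) := by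
    have hS : ∀ M : Matrix (Fin m) (Fin m) ℂ, Matrix.charmatrix M
        = Matrix.scalar (Fin m) (X : ℂ[X]) - M.map (C : ℂ →+* ℂ[X]) := fun M => rfl
    rw [hS, hS, Matrix.mul_sub, Matrix.sub_mul]
    congr 1
    · have hcomm : (N.map (C : ℂ →+* ℂ[X])) * Matrix.scalar (Fin m) (X : ℂ[X])
          = Matrix.scalar (Fin m) (X : ℂ[X]) * (N.map (C : ℂ →+* ℂ[X])) :=
        (Matrix.scalar_commute (X : ℂ[X]) (fun r' => Commute.all _ _) _).symm.eq
      rw [hcomm, mul_assoc, hmap1, mul_one]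
    · rw [Matrix.map_mul, Matrix.map_mul]
  unfold Matrix.charpoly
  rw [hch, Matrix.det_mul, Matrix.det_mul]
  have hre : (N.map (C : ℂ →+* ℂ[X])).det * (Matrix.charmatrix Cm).det
        * ((N⁻¹).map (C : ℂ →+* ℂ[X])).det
      = ((N.map (C : ℂ →+* ℂ[X])).det * ((N⁻¹).map (C : ℂ →+* ℂ[X])).det)
        * (Matrix.charmatrix Cm).det := by ring
  rw [hre, ← Matrix.det_mul, hmap1, Matrix.det_one, one_mul]

lemma exists_path {n : ℕ} (R : Matrix (Fin n) (Fin n) ℂ) (hR : IsUnit R.det) :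
    ∃ f : ℂ → Matrix (Fin n) (Fin n) ℂ,
      (∀ i j, Differentiable ℂ fun ζ => f ζ i j) ∧ (∀ ζ, IsUnit (f ζ).det) ∧
      f 0 = 1 ∧ f 1 = R := by
  classical
  have hdet : R.det ≠ 0 := hR.ne_zero
  apply Matrix.diagonal_transvection_induction_of_det_ne_zero
    (P := fun M => ∃ f : ℂ → Matrix (Fin n) (Fin n) ℂ,
      (∀ i j, Differentiable ℂ fun ζ => f ζ i j) ∧ (∀ ζ, IsUnit (f ζ).det) ∧
      f 0 = 1 ∧ f 1 = M) R hdet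
  · intro D hD
    have hDi : ∀ i, D i ≠ 0 := by
      intro i hi
      rw [Matrix.det_diagonal] at hD
      exact hD (Finset.prod_eq_zero (Finset.mem_univ i) hi)
    refine ⟨fun ζ => Matrix.diagonal (fun i => Complex.exp (ζ * Complex.log (D i))),
      ?_, ?_, ?_, ?_⟩
    · intro i j
      by_cases hij : i = j
      · subst hij
        simp only [Matrix.diagonal_apply_eq]
        exact (differentiable_id.mul (differentiable_const _)).cexp
      · simp only [Matrix.diagonal_apply_ne _ hij]
        exact differentiable_const _
    · intro ζ
      rw [Matrix.det_diagonal]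
      exact isUnit_iff_ne_zero.2 (Finset.prod_ne_zero_iff.2 fun i _ => Complex.exp_ne_zero _)
    · refine (congrArg Matrix.diagonal (funext fun i => ?_)).trans Matrix.diagonal_one
      rw [zero_mul, Complex.exp_zero]
    · refine congrArg Matrix.diagonal (funext fun i => ?_)
      rw [one_mul, Complex.exp_log (hDi i)]
  · intro t
    refine ⟨fun ζ => Matrix.transvection t.i t.j (ζ * t.c), ?_, ?_, ?_, ?_⟩
    · intro a b
      have hfun : (fun ζ => Matrix.transvection t.i t.j (ζ * t.c) a b)
          = fun ζ => (1 : Matrix (Fin n) (Fin n) ℂ) a b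
              + (if t.i = a ∧ t.j = b then ζ * t.c else 0) := by
        funext ζ
        simp [Matrix.transvection, Matrix.single, Matrix.add_apply]
      rw [hfun]
      by_cases h : t.i = a ∧ t.j = b
      · simp only [if_pos h]
        exact (differentiable_const _).add (differentiable_id.mul (differentiable_const _))
      · simp only [if_neg h]
        exact (differentiable_const _).add (differentiable_const _)
    · intro ζ
      rw [Matrix.det_transvection_of_ne _ _ t.hij]
      exact isUnit_one
    · show Matrix.transvection t.i t.j (0 * t.c) = 1
      rw [zero_mul, Matrix.transvection_zero]
    · show Matrix.transvection t.i t.j (1 * t.c) = t.toMatrix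
      rw [one_mul]
      cases t
      rfl
  · rintro M1 M2 h1 h2 ⟨f1, hd1, hu1, h01, h11⟩ ⟨f2, hd2, hu2, h02, h12⟩
    refine ⟨fun ζ => f1 ζ * f2 ζ, ?_, ?_, ?_, ?_⟩
    · intro i j
      have : (fun ζ => (f1 ζ * f2 ζ) i j) = fun ζ => ∑ k, f1 ζ i k * f2 ζ k j := by
        funext ζ; rw [Matrix.mul_apply]
      rw [this]
      exact Differentiable.fun_sum fun k _ => (hd1 i k).mul (hd2 k j)
    · intro ζ
      rw [Matrix.det_mul]
      exact (hu1 ζ).mul (hu2 ζ)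
    · show f1 0 * f2 0 = 1
      rw [h01, h02, one_mul]
    · show f1 1 * f2 1 = M1 * M2
      rw [h11, h12]


/-- coefficient tuple from sigma tuple -/
def aOf (m : ℕ) (c : Fin m → ℂ) (k : Fin m) : ℂ :=
  (-1 : ℂ) ^ (m - (k : ℕ)) * c (Fin.rev k)

lemma aOf_sigmaMap {m : ℕ} (W : Matrix (Fin m) (Fin m) ℂ) (k : Fin m) :
    aOf m (sigmaMap m W) k = W.charpoly.coeff (k : ℕ) := by
  have hk : (k : ℕ) < m := k.isLt
  unfold aOf sigmaMap
  rw [Fin.val_rev]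
  have h1 : m - ((k : ℕ) + 1) + 1 = m - (k : ℕ) := by omega
  have h2 : m - (m - (k : ℕ)) = (k : ℕ) := by omega
  rw [h1, h2, ← mul_assoc, ← pow_add]
  have h3 : (-1 : ℂ) ^ ((m - (k : ℕ)) + (m - (k : ℕ))) = 1 := by
    rw [← two_mul, pow_mul]
    norm_num
  rw [h3, one_mul]

lemma pOf_sigma {m : ℕ} (W : Matrix (Fin m) (Fin m) ℂ) :
    pOf m (aOf m (sigmaMap m W)) = W.charpoly := by
  have hs : ∑ k : Fin m, C (aOf m (sigmaMap m W) k) * (X : ℂ[X]) ^ (k : ℕ)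
      = ∑ k : Fin m, C (W.charpoly.coeff (k : ℕ)) * (X : ℂ[X]) ^ (k : ℕ) :=
    Finset.sum_congr rfl (fun k _ => by rw [aOf_sigmaMap])
  rw [pOf, hs]
  conv_rhs => rw [(Matrix.charpoly_monic W).as_sum]
  rw [Matrix.charpoly_natDegree_eq_dim, Fintype.card_fin,
    Finset.sum_range (fun i => C (W.charpoly.coeff i) * (X : ℂ[X]) ^ i)]

/-- The disc set for the matrix Lempert function. -/
def discSetM (n : ℕ) (A B : Matrix (Fin n) (Fin n) ℂ) : Set ℝ :=
  {r : ℝ | ∃ α : ℂ, ‖α‖ = r ∧ ‖α‖ < 1 ∧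
    ∃ φ : ℂ → Matrix (Fin n) (Fin n) ℂ,
      (∀ i j, DifferentiableOn ℂ (fun ζ => φ ζ i j) (ball (0:ℂ) 1)) ∧
      MapsTo φ (ball (0:ℂ) 1) (specBall n) ∧ φ 0 = A ∧ φ α = B}

/-- The disc set for the symmetrized-polydisc Lempert function. -/
def discSetG (n : ℕ) (z w : Fin n → ℂ) : Set ℝ :=
  {r : ℝ | ∃ α : ℂ, ‖α‖ = r ∧ ‖α‖ < 1 ∧
    ∃ φ : ℂ → (Fin n → ℂ),
      (∀ i, DifferentiableOn ℂ (fun ζ => φ ζ i) (ball (0:ℂ) 1)) ∧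
      MapsTo φ (ball (0:ℂ) 1) (symPolydisc n) ∧ φ 0 = z ∧ φ α = w}

lemma lift_mem {n : ℕ} (hn : 0 < n) (A B : Matrix (Fin n) (Fin n) ℂ)
    (hAc : IsCyclicMat A) (hBc : IsCyclicMat B)
    (α : ℂ) (hα0 : α ≠ 0) (hα1 : ‖α‖ < 1)
    (φ : ℂ → (Fin n → ℂ))
    (hφd : ∀ i, DifferentiableOn ℂ (fun ζ => φ ζ i) (ball (0:ℂ) 1))
    (hφm : MapsTo φ (ball (0:ℂ) 1) (symPolydisc n))
    (hφ0 : φ 0 = sigmaMap n A) (hφα : φ α = sigmaMap n B) :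
    ‖α‖ ∈ discSetM n A B := by
  obtain ⟨P, hPdet, hPA⟩ := exists_similar_comp hn A hAc
  obtain ⟨Q, hQdet, hQB⟩ := exists_similar_comp hn B hBc
  have hPiQ : IsUnit (P⁻¹ * Q).det := by
    rw [Matrix.det_mul]
    exact (Matrix.isUnit_nonsing_inv_det P hPdet).mul hQdet
  obtain ⟨f, hfd, hfu, hf0, hf1⟩ := exists_path (P⁻¹ * Q) hPiQ
  set M : ℂ → Matrix (Fin n) (Fin n) ℂ := fun ζ => P * f (ζ / α) with hMdef
  have hMdet : ∀ ζ, IsUnit (M ζ).det := by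
    intro ζ
    show IsUnit (P * f (ζ / α)).det
    rw [Matrix.det_mul]
    exact hPdet.mul (hfu _)
  have hM0 : M 0 = P := by
    show P * f (0 / α) = P
    rw [zero_div, hf0, mul_one]
  have hMα : M α = Q := by
    show P * f (α / α) = Q
    rw [div_self hα0, hf1, ← mul_assoc, Matrix.mul_nonsing_inv P hPdet, one_mul]
  set ψ : ℂ → Matrix (Fin n) (Fin n) ℂ :=
    fun ζ => M ζ * compMat n (aOf n (φ ζ)) * (M ζ)⁻¹ with hψdef
  have hMd : ∀ i j, DifferentiableOn ℂ (fun ζ => M ζ i j) (ball (0:ℂ) 1) := by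
    intro i j
    have hfun : (fun ζ => M ζ i j) = fun ζ => ∑ k, P i k * f (ζ / α) k j := by
      funext ζ
      show (P * f (ζ / α)) i j = _
      rw [Matrix.mul_apply]
    rw [hfun]
    apply DifferentiableOn.fun_sum
    intro k _
    apply DifferentiableOn.const_mul
    exact (Differentiable.comp (hfd k j) (differentiable_id.div_const α)).differentiableOn
  have hCd : ∀ i j, DifferentiableOn ℂ (fun ζ => compMat n (aOf n (φ ζ)) i j) (ball (0:ℂ) 1) := by
    intro i j
    by_cases hj : (j : ℕ) + 1 = n
    · have hfun : (fun ζ => compMat n (aOf n (φ ζ)) i j)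
          = fun ζ => -((-1 : ℂ) ^ (n - (i : ℕ)) * φ ζ (Fin.rev i)) := by
        funext ζ
        simp [compMat, aOf, hj]
      rw [hfun]
      exact (DifferentiableOn.const_mul (hφd (Fin.rev i)) _).neg
    · have hfun : (fun ζ => compMat n (aOf n (φ ζ)) i j)
          = fun _ => if (i : ℕ) = (j : ℕ) + 1 then (1 : ℂ) else 0 := by
        funext ζ
        simp [compMat, hj]
      rw [hfun]
      exact differentiableOn_const _
  have hψd : ∀ i j, DifferentiableOn ℂ (fun ζ => ψ ζ i j) (ball (0:ℂ) 1) := by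
    intro i j
    exact diffOn_mul_entries _ _ _
      (diffOn_mul_entries _ _ _ hMd hCd)
      (diffOn_inv_entries M _ hMd (fun ζ _ => hMdet ζ)) i j
  have hch : ∀ ζ, (ψ ζ).charpoly = pOf n (aOf n (φ ζ)) := by
    intro ζ
    show (M ζ * compMat n (aOf n (φ ζ)) * (M ζ)⁻¹).charpoly = _
    rw [charpoly_conj _ _ (hMdet ζ), charpoly_compMat hn]
  refine ⟨α, rfl, hα1, ψ, hψd, ?_, ?_, ?_⟩
  · intro ζ hζ
    obtain ⟨W, hW, hσ⟩ := hφm hζ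
    have hcc : (ψ ζ).charpoly = W.charpoly := by
      rw [hch ζ, ← hσ, pOf_sigma]
    show ∀ μ ∈ (ψ ζ).charpoly.roots, ‖μ‖ < 1
    rw [hcc]
    exact hW
  · show M 0 * compMat n (aOf n (φ 0)) * (M 0)⁻¹ = A
    rw [hM0, hφ0]
    have hA' : compMat n (aOf n (sigmaMap n A)) = compMat n (fun k => A.charpoly.coeff (k : ℕ)) :=
      congrArg (compMat n) (funext fun k => aOf_sigmaMap A k)
    rw [hA', ← hPA, mul_assoc, Matrix.mul_nonsing_inv P hPdet, mul_one]
  · show M α * compMat n (aOf n (φ α)) * (M α)⁻¹ = B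
    rw [hMα, hφα]
    have hB' : compMat n (aOf n (sigmaMap n B)) = compMat n (fun k => B.charpoly.coeff (k : ℕ)) :=
      congrArg (compMat n) (funext fun k => aOf_sigmaMap B k)
    rw [hB', ← hQB, mul_assoc, Matrix.mul_nonsing_inv Q hQdet, mul_one]

lemma sInf_zero (S : Set ℝ) (h0 : (0:ℝ) ∈ S) (hpos : ∀ r ∈ S, (0:ℝ) ≤ r) : sInf S = 0 :=
  le_antisymm (csInf_le ⟨0, hpos⟩ h0) (le_csInf ⟨0, h0⟩ hpos)

end AglerYoung

/-- Agler–Young: if `A, B ∈ Ω_n` are cyclic, then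
`l_{Ω_n}(A,B) = l_{G_n}(σ(A),σ(B))`. -/
theorem lempert_eq_of_cyclic (n : ℕ) (A B : Matrix (Fin n) (Fin n) ℂ)
    (hA : A ∈ specBall n) (hB : B ∈ specBall n)
    (hAc : IsCyclicMat A) (hBc : IsCyclicMat B) :
    lempertM n (specBall n) A B =
      lempertG n (symPolydisc n) (sigmaMap n A) (sigmaMap n B) := by
  classical
  have hMeq : lempertM n (specBall n) A B = sInf (AglerYoung.discSetM n A B) := rfl
  have hGeq : lempertG n (symPolydisc n) (sigmaMap n A) (sigmaMap n B)
      = sInf (AglerYoung.discSetG n (sigmaMap n A) (sigmaMap n B)) := rfl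
  rw [hMeq, hGeq]
  have hnonnegM : ∀ r ∈ AglerYoung.discSetM n A B, (0:ℝ) ≤ r := by
    rintro r ⟨α, hr, -⟩
    rw [← hr]; exact norm_nonneg α
  have hnonnegG : ∀ r ∈ AglerYoung.discSetG n (sigmaMap n A) (sigmaMap n B), (0:ℝ) ≤ r := by
    rintro r ⟨α, hr, -⟩
    rw [← hr]; exact norm_nonneg α
  rcases Nat.eq_zero_or_pos n with hn | hn
  · subst hn
    have hAB : A = B := by
      ext i j; exact i.elim0
    subst hAB
    have h0M : (0:ℝ) ∈ AglerYoung.discSetM 0 A A :=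
      ⟨0, by simp, by simp, fun _ => A, fun i j => differentiableOn_const _,
        fun ζ _ => hA, rfl, rfl⟩
    have h0G : (0:ℝ) ∈ AglerYoung.discSetG 0 (sigmaMap 0 A) (sigmaMap 0 A) :=
      ⟨0, by simp, by simp, fun _ => sigmaMap 0 A, fun i => differentiableOn_const _,
        fun ζ _ => ⟨A, hA, rfl⟩, rfl, rfl⟩
    rw [AglerYoung.sInf_zero _ h0M hnonnegM, AglerYoung.sInf_zero _ h0G hnonnegG]
  · have hsub : AglerYoung.discSetM n A B
        ⊆ AglerYoung.discSetG n (sigmaMap n A) (sigmaMap n B) := by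
      rintro r ⟨α, hr, hα1, φ, hφd, hφm, hφ0, hφα⟩
      refine ⟨α, hr, hα1, fun ζ => sigmaMap n (φ ζ), ?_, ?_, ?_, ?_⟩
      · intro i
        have hfun : (fun ζ => sigmaMap n (φ ζ) i)
            = fun ζ => (-1:ℂ) ^ ((i:ℕ)+1) * (φ ζ).charpoly.coeff (n - ((i:ℕ)+1)) := rfl
        rw [hfun]
        exact DifferentiableOn.const_mul (AglerYoung.diffOn_charpoly_coeff φ _ hφd _) _
      · intro ζ hζ
        exact ⟨φ ζ, hφm hζ, rfl⟩
      · show sigmaMap n (φ 0) = sigmaMap n A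
        rw [hφ0]
      · show sigmaMap n (φ α) = sigmaMap n B
        rw [hφα]
    rcases Set.eq_empty_or_nonempty
        (AglerYoung.discSetG n (sigmaMap n A) (sigmaMap n B)) with hG | hG
    · have hM : AglerYoung.discSetM n A B = ∅ :=
        Set.eq_empty_of_subset_empty (hG ▸ hsub)
      rw [hM, hG]
    · have hbddM : BddBelow (AglerYoung.discSetM n A B) := ⟨0, hnonnegM⟩
      have hbddG : BddBelow (AglerYoung.discSetG n (sigmaMap n A) (sigmaMap n B)) :=
        ⟨0, hnonnegG⟩
      have hMne : (AglerYoung.discSetM n A B).Nonempty := by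
        obtain ⟨r0, α, hr, hα1, φ, hφd, hφm, hφ0, hφα⟩ := hG
        by_cases hα0 : α = 0
        · have hσ : sigmaMap n A = sigmaMap n B := by
            rw [← hφ0, ← hφα, hα0]
          have habs : ‖(((1:ℝ)/2 : ℝ) : ℂ)‖ < 1 := by
            rw [Complex.norm_real, Real.norm_eq_abs, abs_of_pos (by norm_num : (0:ℝ) < (1:ℝ)/2)]
            norm_num
          exact ⟨_, AglerYoung.lift_mem hn A B hAc hBc (((1:ℝ)/2 : ℝ) : ℂ)
            (by simp only [ne_eq, Complex.ofReal_eq_zero]; norm_num) habs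
            (fun _ => sigmaMap n A)
            (fun i => differentiableOn_const _) (fun ζ _ => ⟨A, hA, rfl⟩) rfl (by rw [hσ])⟩
        · exact ⟨_, AglerYoung.lift_mem hn A B hAc hBc α hα0 hα1 φ hφd hφm hφ0 hφα⟩
      apply le_antisymm
      · apply le_csInf hG
        rintro r ⟨α, hr, hα1, φ, hφd, hφm, hφ0, hφα⟩
        by_cases hα0 : α = 0
        · have hr0 : r = 0 := by rw [← hr, hα0]; simp
          rw [hr0]
          have hσ : sigmaMap n A = sigmaMap n B := by rw [← hφ0, ← hφα, hα0]
          by_contra hlt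
          push_neg at hlt
          set c := sInf (AglerYoung.discSetM n A B) with hc
          obtain ⟨m, hm⟩ := exists_nat_gt (1 / c)
          have hm2 : 1 / c < (m:ℝ) + 2 := lt_trans hm (by linarith)
          have hεpos : (0:ℝ) < 1 / ((m:ℝ) + 2) := by positivity
          have hεlt : 1 / ((m:ℝ) + 2) < c := by
            have h := one_div_lt_one_div_of_lt (by positivity : (0:ℝ) < 1/c) hm2
            rwa [one_div_one_div] at h
          have hεlt1 : 1 / ((m:ℝ)+2) < 1 := by
            rw [div_lt_one (by positivity)]; linarith
          have habs : ‖((1/((m:ℝ)+2) : ℝ) : ℂ)‖ = 1/((m:ℝ)+2) := by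
            rw [Complex.norm_real, Real.norm_eq_abs, abs_of_pos hεpos]
          have hmem := AglerYoung.lift_mem hn A B hAc hBc ((1/((m:ℝ)+2) : ℝ) : ℂ)
            (by simp only [ne_eq, Complex.ofReal_eq_zero]; exact ne_of_gt hεpos)
            (by rw [habs]; exact hεlt1) (fun _ => sigmaMap n A)
            (fun i => differentiableOn_const _) (fun ζ _ => ⟨A, hA, rfl⟩) rfl (by rw [hσ])
          rw [habs] at hmem
          exact absurd (csInf_le hbddM hmem) (not_le.2 hεlt)
        · rw [← hr]
          exact csInf_le hbddM
            (AglerYoung.lift_mem hn A B hAc hBc α hα0 hα1 φ hφd hφm hφ0 hφα)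
      · exact csInf_le_csInf hbddG hMne hsub
end
end

section
/- Let B ∈ M_n be a nilpotent matrix in Jordan form: its only nonzero entries are b_{j−1,j} = 1 for j in a set F_1 ⊂ {2,…,n}; let F_0 = {1,…,n} \ F_1 = {1 = b_1 < b_2 < … < b_{n−r}} (where r = rank B), ordered so that b_{l+1} − b_l is nondecreasing (with b_{n−r+1} = n+1). For 1 ≤ i ≤ n set d_i = 1 + #(F_0 ∩ {n−i+2,…,n}). Then for every M ∈ M_n the polynomial function t ↦ σ_i(B + tM) vanishes to order at least d_i at t = 0 (i.e. every monomial of σ_i(B + M), viewed as a polynomial in the entries of M, has degree at least d_i), and there exists M ∈ M_n for which the vanishing order at t = 0 is exactly d_i. -/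
open Metric Set Polynomial

noncomputable section

lemma coeff_prod_linear {R : Type*} [CommRing R] {ι : Type*} [DecidableEq ι]
    (J : Finset ι) (a b : ι → R) :
    ∀ m : ℕ, (∏ j ∈ J, (C (a j) * X + C (b j))).coeff m
      = ∑ T ∈ J.powersetCard m, (∏ j ∈ T, a j) * ∏ j ∈ J \ T, b j := by
  induction J using Finset.induction_on with
  | empty =>
    intro m; cases m with
    | zero => simp
    | succ m =>
      rw [Finset.powersetCard_eq_empty.2 (by simp)]
      simp [Polynomial.coeff_one]
  | @insert x J hx ih =>
    intro m
    rw [Finset.prod_insert hx]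
    cases m with
    | zero =>
      rw [Polynomial.mul_coeff_zero, ih 0]
      simp [Finset.prod_insert hx]
    | succ m =>
      have hsplit : ((C (a x) * X + C (b x)) *
          (∏ j ∈ J, (C (a j) * X + C (b j)))).coeff (m+1)
          = a x * (∏ j ∈ J, (C (a j) * X + C (b j))).coeff m
            + b x * (∏ j ∈ J, (C (a j) * X + C (b j))).coeff (m+1) := by
        rw [add_mul, Polynomial.coeff_add, mul_assoc, coeff_C_mul, coeff_X_mul, coeff_C_mul]
      rw [hsplit, ih m, ih (m+1), Finset.powersetCard_succ_insert hx]
      have hdisj : Disjoint (Finset.powersetCard (m+1) J)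
          ((Finset.powersetCard m J).image (insert x)) := by
        rw [Finset.disjoint_left]
        intro T hT hT'
        simp only [Finset.mem_image, Finset.mem_powersetCard] at hT hT'
        obtain ⟨U, ⟨hUJ, _⟩, rfl⟩ := hT'
        exact hx (hT.1 (Finset.mem_insert_self x U))
      rw [Finset.sum_union hdisj]
      have h1 : ∑ T ∈ Finset.powersetCard (m+1) J,
          (∏ j ∈ T, a j) * ∏ j ∈ insert x J \ T, b j
          = b x * ∑ T ∈ Finset.powersetCard (m+1) J,
            (∏ j ∈ T, a j) * ∏ j ∈ J \ T, b j := by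
        rw [Finset.mul_sum]
        refine Finset.sum_congr rfl fun T hT => ?_
        rw [Finset.mem_powersetCard] at hT
        have hxT : x ∉ T := fun h => hx (hT.1 h)
        have : insert x J \ T = insert x (J \ T) := by
          ext j; simp only [Finset.mem_sdiff, Finset.mem_insert]
          constructor
          · rintro ⟨h1 | h1, h2⟩ 
            · exact Or.inl h1
            · exact Or.inr ⟨h1, h2⟩
          · rintro (rfl | ⟨h1, h2⟩)
            · exact ⟨Or.inl rfl, hxT⟩
            · exact ⟨Or.inr h1, h2⟩
        rw [this, Finset.prod_insert (by simp [hx])]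
        ring
      have h2 : ∑ T ∈ (Finset.powersetCard m J).image (insert x),
          (∏ j ∈ T, a j) * ∏ j ∈ insert x J \ T, b j
          = a x * ∑ T ∈ Finset.powersetCard m J,
            (∏ j ∈ T, a j) * ∏ j ∈ J \ T, b j := by
        rw [Finset.sum_image, Finset.mul_sum]
        · refine Finset.sum_congr rfl fun T hT => ?_
          rw [Finset.mem_powersetCard] at hT
          have hxT : x ∉ T := fun h => hx (hT.1 h)
          have hsd : insert x J \ insert x T = J \ T := by
            ext j; simp only [Finset.mem_sdiff, Finset.mem_insert, not_or]
            constructor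
            · rintro ⟨h1 | h1, h2, h3⟩
              · exact absurd h1 h2
              · exact ⟨h1, h3⟩
            · rintro ⟨h1, h2⟩
              exact ⟨Or.inr h1, fun h => hx (h ▸ h1), h2⟩
          rw [hsd, Finset.prod_insert hxT]
          ring
        · intro T hT U hU hTU
          rw [Finset.mem_coe, Finset.mem_powersetCard] at hT hU
          have := congrArg (Finset.erase · x) hTU
          simpa [Finset.erase_insert_eq_erase,
            Finset.erase_eq_of_notMem (fun h => hx (hT.1 h)),
            Finset.erase_eq_of_notMem (fun h => hx (hU.1 h))] using this
      rw [h1, h2]; ring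

lemma iteratedDeriv_polyeval (p : ℂ[X]) (k : ℕ) :
    iteratedDeriv k (fun t : ℂ => p.eval t) = fun t => ((derivative (R := ℂ))^[k] p).eval t := by
  induction k generalizing p with
  | zero => simp [iteratedDeriv_zero]
  | succ k ih =>
    rw [iteratedDeriv_succ']
    have h : deriv (fun t : ℂ => p.eval t) = fun t => (derivative p).eval t :=
      funext fun x => Polynomial.deriv p
    rw [h, ih, Function.iterate_succ_apply]

lemma iteratedDeriv_polyeval_zero (p : ℂ[X]) (k : ℕ) :
    iteratedDeriv k (fun t : ℂ => p.eval t) 0 = (k.factorial : ℂ) * p.coeff k := by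
  rw [iteratedDeriv_polyeval]
  show ((derivative (R := ℂ))^[k] p).eval 0 = _
  rw [← Polynomial.coeff_zero_eq_eval_zero, Polynomial.coeff_iterate_derivative]
  simp [Nat.descFactorial_self, nsmul_eq_mul]

lemma charpoly_coeff_expand {R : Type*} [CommRing R] {n : ℕ}
    (A : Matrix (Fin n) (Fin n) R) (m' : ℕ) :
    A.charpoly.coeff m' = ∑ σ : Equiv.Perm (Fin n), ((Equiv.Perm.sign σ : ℤ) : R) *
      ∑ T ∈ Finset.powersetCard m' Finset.univ,
        (∏ j ∈ T, if σ j = j then (1:R) else 0) * ∏ j ∈ Finset.univ \ T, -(A (σ j) j) := by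
  have hcm : ∀ r c : Fin n, Matrix.charmatrix A r c
      = C (if r = c then (1:R) else 0) * X + C (-(A r c)) := by
    intro r c
    by_cases h : r = c
    · subst h; rw [Matrix.charmatrix_apply_eq]; simp; ring
    · rw [Matrix.charmatrix_apply_ne _ _ _ h]; simp [h]
  have : A.charpoly = (Matrix.charmatrix A).det := rfl
  rw [this, Matrix.det_apply', Polynomial.finset_sum_coeff]
  refine Finset.sum_congr rfl fun σ _ => ?_
  have hc : ((Equiv.Perm.sign σ : ℤ) : R[X]) = C ((Equiv.Perm.sign σ : ℤ) : R) := by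
    push_cast; simp
  rw [hc, Polynomial.coeff_C_mul]
  congr 1
  have := coeff_prod_linear (R := R) Finset.univ
    (fun j => if σ j = j then (1:R) else 0) (fun j => -(A (σ j) j)) m'
  rw [← this]
  congr 1
  exact Finset.prod_congr rfl fun j _ => hcm (σ j) j


section comb
variable {m : ℕ} {b : ℕ → ℕ}

lemma bmono (hmono : ∀ l, 1 ≤ l → l ≤ m → b l < b (l + 1)) :
    ∀ l l', 1 ≤ l → l ≤ l' → l' ≤ m + 1 → b l ≤ b l' := by
  intro l l' h1 h2 h3
  induction l', h2 using Nat.le_induction with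
  | base => exact le_rfl
  | succ l'' hl'' ih =>
    have h4 : l'' ≤ m := by omega
    exact le_trans (ih (by omega)) (le_of_lt (hmono l'' (by omega) h4))

lemma bstrict (hmono : ∀ l, 1 ≤ l → l ≤ m → b l < b (l + 1)) :
    ∀ l l', 1 ≤ l → l < l' → l' ≤ m + 1 → b l < b l' := by
  intro l l' h1 h2 h3
  calc b l < b (l+1) := hmono l h1 (by omega)
    _ ≤ b l' := bmono hmono (l+1) l' (by omega) (by omega) h3

lemma gapmono (hmono : ∀ l, 1 ≤ l → l ≤ m → b l < b (l + 1))
    (hgap : ∀ l, 1 ≤ l → l + 1 ≤ m → b (l + 1) - b l ≤ b (l + 2) - b (l + 1)) :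
    ∀ l l', 1 ≤ l → l ≤ l' → l' ≤ m → b (l + 1) + b l' ≤ b (l' + 1) + b l := by
  intro l l' h1 h2 h3
  induction l', h2 using Nat.le_induction with
  | base => omega
  | succ l'' hl'' ih =>
    have h4 : l'' ≤ m := by omega
    have ih' := ih h4
    have hg := hgap l'' (by omega) (by omega)
    have h5 := hmono l'' (by omega) h4
    have h6 := hmono (l''+1) (by omega) (by omega)
    have h7 : l'' + 1 + 1 = l'' + 2 := rfl
    rw [h7] at h6
    rw [h7]
    omega

lemma bwindow (hmono : ∀ l, 1 ≤ l → l ≤ m → b l < b (l + 1))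
    (hgap : ∀ l, 1 ≤ l → l + 1 ≤ m → b (l + 1) - b l ≤ b (l + 2) - b (l + 1)) :
    ∀ w l l', 1 ≤ l → l ≤ l' → l' + w ≤ m + 1 → b (l + w) + b l' ≤ b (l' + w) + b l := by
  intro w
  induction w with
  | zero => intro l l' _ _ _; simp [Nat.add_comm]
  | succ w ih =>
    intro l l' h1 h2 h3
    have ih' := ih l l' h1 h2 (by omega)
    have hg := gapmono hmono hgap (l + w) (l' + w) (by omega) (by omega) (by omega)
    have e1 : l + w + 1 = l + (w + 1) := by omega
    have e2 : l' + w + 1 = l' + (w + 1) := by omega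
    rw [e1, e2] at hg
    omega

lemma sumbound (hmono : ∀ l, 1 ≤ l → l ≤ m → b l < b (l + 1))
    (hgap : ∀ l, 1 ≤ l → l + 1 ≤ m → b (l + 1) - b l ≤ b (l + 2) - b (l + 1)) :
    ∀ (k m' : ℕ) (U : Finset ℕ), U.card = k → U ⊆ Finset.Icc 1 m' → m' ≤ m →
      (∑ l ∈ U, (b (l + 1) - b l)) + b (m' + 1 - k) ≤ b (m' + 1) := by
  intro k
  induction k with
  | zero =>
    intro m' U hcard hsub hm'
    rw [Finset.card_eq_zero] at hcard
    subst hcard; simp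
  | succ k ih =>
    intro m' U hcard hsub hm'
    have hne : U.Nonempty := Finset.card_pos.mp (by omega)
    set x := U.max' hne with hxdef
    have hxU : x ∈ U := U.max'_mem hne
    have hx' : x ∈ Finset.Icc 1 m' := hsub hxU
    rw [Finset.mem_Icc] at hx'
    have hUx : U ⊆ Finset.Icc 1 x := by
      intro y hy
      have := U.le_max' y hy
      have := hsub hy
      rw [Finset.mem_Icc] at this ⊢
      omega
    have hxk : k + 1 ≤ x := by
      have := Finset.card_le_card hUx
      rw [Nat.card_Icc] at this
      omega
    have hsubE : U.erase x ⊆ Finset.Icc 1 (x - 1) := by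
      intro y hy
      rw [Finset.mem_erase] at hy
      have h1 := hUx hy.2
      rw [Finset.mem_Icc] at h1 ⊢
      have : y ≠ x := hy.1
      omega
    have hcardE : (U.erase x).card = k := by
      rw [Finset.card_erase_of_mem hxU]; omega
    have ihE := ih (x - 1) (U.erase x) hcardE hsubE (by omega)
    have hsum : ∑ l ∈ U, (b (l + 1) - b l)
        = (b (x + 1) - b x) + ∑ l ∈ U.erase x, (b (l + 1) - b l) :=
      (Finset.add_sum_erase U _ hxU).symm
    have hx1 : x - 1 + 1 = x := by omega
    rw [hx1] at ihE
    have hwin := bwindow hmono hgap (k + 1) (x - k) (m' - k) (by omega) (by omega) (by omega)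
    have e1 : x - k + (k + 1) = x + 1 := by omega
    have e2 : m' - k + (k + 1) = m' + 1 := by omega
    rw [e1, e2] at hwin
    have hbx : b x ≤ b (x + 1) := le_of_lt (hmono x (by omega) (by omega))
    have hbxk : b (x - k) ≤ b x := bmono hmono (x - k) x (by omega) (by omega) (by omega)
    have he4 : m' + 1 - (k + 1) = m' - k := by omega
    rw [he4]
    omega

end comb

lemma lemA {n : ℕ} {F1 : Finset ℕ} (hF1 : F1 ⊆ Finset.Icc 2 n)
    {m : ℕ} {b : ℕ → ℕ} (hb1 : b 1 = 1) (hblast : b (m + 1) = n + 1)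
    (hmono : ∀ l, 1 ≤ l → l ≤ m → b l < b (l + 1))
    (himage : Finset.Icc 1 n \ F1 = Finset.image b (Finset.Icc 1 m))
    (hgap : ∀ l, 1 ≤ l → l + 1 ≤ m → b (l + 1) - b l ≤ b (l + 2) - b (l + 1))
    (S : Finset ℕ) (hS : S ⊆ Finset.Icc 1 n) (hpos : 0 < S.card) :
    1 + ((Finset.Icc 1 n \ F1) ∩ Finset.Icc (n - S.card + 2) n).card
      + (S.filter (fun a => a ∈ F1 ∧ a - 1 ∈ S)).card ≤ S.card := by
  classical
  set i' := S.card with hi'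
  obtain ⟨a0, ha0⟩ : S.Nonempty := Finset.card_pos.mp hpos
  have ha0' := hS ha0
  rw [Finset.mem_Icc] at ha0'
  have hn1 : 1 ≤ n := le_trans ha0'.1 ha0'.2
  have hin : i' ≤ n := by
    have := Finset.card_le_card hS
    rwa [Nat.card_Icc, Nat.add_sub_cancel] at this
  -- m ≥ 1
  have h1F0 : (1 : ℕ) ∈ Finset.Icc 1 n \ F1 := by
    rw [Finset.mem_sdiff, Finset.mem_Icc]
    refine ⟨⟨le_rfl, hn1⟩, fun h => ?_⟩
    have := hF1 h; rw [Finset.mem_Icc] at this; omega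
  have hm1 : 1 ≤ m := by
    rw [himage, Finset.mem_image] at h1F0
    obtain ⟨l, hl, _⟩ := h1F0
    rw [Finset.mem_Icc] at hl; omega
  -- range of b
  have hbrange : ∀ l ∈ Finset.Icc 1 m, b l ∈ Finset.Icc 1 n ∧ b l ∉ F1 := by
    intro l hl
    have : b l ∈ Finset.Icc 1 n \ F1 := by
      rw [himage]; exact Finset.mem_image_of_mem b hl
    rw [Finset.mem_sdiff] at this; exact this
  -- fibers
  set fib : ℕ → Finset ℕ := fun l => S.filter (fun a => b l ≤ a ∧ a < b (l + 1)) with hfib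
  have hfiber : ∀ a ∈ S, ∃ l, l ∈ Finset.Icc 1 m ∧ a ∈ fib l := by
    intro a ha
    have haIcc := hS ha; rw [Finset.mem_Icc] at haIcc
    set Fl := (Finset.Icc 1 m).filter (fun l => b l ≤ a) with hFl
    have hFlne : Fl.Nonempty := ⟨1, by
      rw [hFl, Finset.mem_filter, Finset.mem_Icc, hb1]; exact ⟨⟨le_rfl, hm1⟩, haIcc.1⟩⟩
    set l := Fl.max' hFlne with hl
    have hlF : l ∈ Fl := Fl.max'_mem hFlne
    rw [hFl, Finset.mem_filter, Finset.mem_Icc] at hlF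
    refine ⟨l, by rw [Finset.mem_Icc]; exact hlF.1, ?_⟩
    rw [hfib, Finset.mem_filter]
    refine ⟨ha, hlF.2, ?_⟩
    by_cases hlm : l = m
    · rw [hlm, hblast]; omega
    · by_contra hcon
      push_neg at hcon
      have : l + 1 ∈ Fl := by
        rw [hFl, Finset.mem_filter, Finset.mem_Icc]
        exact ⟨⟨by omega, by omega⟩, hcon⟩
      have := Fl.le_max' _ this
      omega
  have hdisj : ∀ l ∈ Finset.Icc 1 m, ∀ l' ∈ Finset.Icc 1 m, l ≠ l' →
      ∀ a, a ∈ fib l → a ∈ fib l' → False := by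
    intro l hl l' hl' hne a hal hal'
    rw [Finset.mem_Icc] at hl hl'
    rw [hfib, Finset.mem_filter] at hal hal'
    rcases Nat.lt_or_ge l l' with h | h
    · have : b (l + 1) ≤ b l' := bmono hmono (l+1) l' (by omega) (by omega) (by omega)
      omega
    · have hne' : l' < l := by omega
      have : b (l' + 1) ≤ b l := bmono hmono (l'+1) l (by omega) (by omega) (by omega)
      omega
  set U := (Finset.Icc 1 m).filter (fun l => (fib l).Nonempty) with hU
  set u := U.card with hu
  have hUsub : U ⊆ Finset.Icc 1 m := Finset.filter_subset _ _
  -- S.card ≤ sum of interval lengths over U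
  have hcardsum : i' ≤ ∑ l ∈ U, (b (l + 1) - b l) := by
    have hsub : S ⊆ U.biUnion fib := by
      intro a ha
      obtain ⟨l, hl, hal⟩ := hfiber a ha
      rw [Finset.mem_biUnion]
      exact ⟨l, by rw [hU, Finset.mem_filter]; exact ⟨hl, ⟨a, hal⟩⟩, hal⟩
    calc i' ≤ (U.biUnion fib).card := Finset.card_le_card hsub
      _ ≤ ∑ l ∈ U, (fib l).card := Finset.card_biUnion_le
      _ ≤ ∑ l ∈ U, (b (l + 1) - b l) := by
          refine Finset.sum_le_sum fun l hl => ?_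
          have : fib l ⊆ Finset.Ico (b l) (b (l + 1)) := by
            intro a ha; rw [hfib, Finset.mem_filter] at ha
            rw [Finset.mem_Ico]; exact ha.2
          calc (fib l).card ≤ _ := Finset.card_le_card this
            _ = b (l + 1) - b l := Nat.card_Ico _ _
  have hupos : 1 ≤ u := by
    obtain ⟨l, hl, hal⟩ := hfiber a0 ha0
    have : l ∈ U := by rw [hU, Finset.mem_filter]; exact ⟨hl, ⟨a0, hal⟩⟩
    rw [hu]
    exact Finset.card_pos.mpr ⟨l, this⟩
  have hsb := sumbound hmono hgap u m U rfl hUsub le_rfl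
  rw [hblast] at hsb
  -- bottoms
  set Bset := S.filter (fun a => ¬(a ∈ F1 ∧ a - 1 ∈ S)) with hBset
  have hpart : (S.filter (fun a => a ∈ F1 ∧ a - 1 ∈ S)).card + Bset.card = i' := by
    rw [hBset, Finset.card_filter_add_card_filter_not]
  -- u ≤ Bset.card via min of fibers
  have huB : u ≤ Bset.card := by
    have hmem : ∀ l ∈ U, (fib l).Nonempty := fun l hl => by
      rw [hU, Finset.mem_filter] at hl; exact hl.2
    refine Finset.card_le_card_of_injOn
      (fun l => if h : l ∈ U then (fib l).min' (by
        rw [hU, Finset.mem_filter] at h; exact h.2) else 0) ?_ ?_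
    · intro l hl
      simp only [Finset.mem_coe] at hl ⊢
      simp only [hl, dif_pos]
      have hne := hmem l hl
      have hmin : (fib l).min' hne ∈ fib l := (fib l).min'_mem hne
      set a := (fib l).min' hne with hadef
      rw [hfib, Finset.mem_filter] at hmin
      rw [hBset, Finset.mem_filter]
      refine ⟨hmin.1, fun hcon => ?_⟩
      have haF1 := hF1 hcon.1
      rw [Finset.mem_Icc] at haF1
      have hlIcc := hUsub hl
      rcases Nat.lt_or_ge (a - 1) (b l) with h | h
      · -- a = b l, so a not in F1
        have hab : a = b l := by omega
        exact (hbrange l hlIcc).2 (hab ▸ hcon.1)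
      · have hfa : a - 1 ∈ fib l := by
          rw [hfib, Finset.mem_filter]
          exact ⟨hcon.2, h, by omega⟩
        have := (fib l).min'_le _ hfa
        omega
    · intro l hl l' hl' heq
      simp only [Finset.mem_coe] at hl hl'
      simp only [hl, hl', dif_pos] at heq
      by_contra hne
      exact hdisj l (hUsub hl) l' (hUsub hl') hne _
        (heq ▸ (fib l).min'_mem (hmem l hl)) ((fib l').min'_mem (hmem l' hl'))
  -- count e
  set e := ((Finset.Icc 1 n \ F1) ∩ Finset.Icc (n - i' + 2) n).card with he
  set Fe := (Finset.Icc 1 m).filter (fun l => n - i' + 2 ≤ b l) with hFe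
  have heFe : e = Fe.card := by
    rw [he, himage]
    have h1 : Finset.image b (Finset.Icc 1 m) ∩ Finset.Icc (n - i' + 2) n
        = (Finset.image b (Finset.Icc 1 m)).filter (fun a => a ∈ Finset.Icc (n - i' + 2) n) := by
      rw [Finset.filter_mem_eq_inter]
    rw [h1, Finset.filter_image]
    rw [Finset.card_image_of_injOn]
    · congr 1
      apply Finset.filter_congr
      intro l hl
      rw [Finset.mem_Icc] at hl
      have hbl := (hbrange l (by rw [Finset.mem_Icc]; exact hl)).1
      rw [Finset.mem_Icc] at hbl
      simp only [Finset.mem_Icc]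
      constructor
      · rintro ⟨h, _⟩; exact h
      · intro h; exact ⟨h, hbl.2⟩
    · intro l hl l' hl' heq
      simp only [Finset.coe_filter, Set.mem_setOf_eq, Finset.mem_Icc] at hl hl'
      by_contra hne
      rcases Nat.lt_or_ge l l' with h | h
      · have := bstrict hmono l l' (by omega) h (by omega); omega
      · have h' : l' < l := by omega
        have := bstrict hmono l' l (by omega) h' (by omega); omega
  -- u ≥ e + 1
  have hue : e + 1 ≤ u := by
    by_contra hcon
    push_neg at hcon
    have hule : u ≤ e := by omega
    have hege : 1 ≤ e := le_trans hupos hule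
    have hFene : Fe.Nonempty := by
      rw [heFe] at hege; exact Finset.card_pos.mp hege
    set l0 := Fe.min' hFene with hl0
    have hl0F : l0 ∈ Fe := Fe.min'_mem hFene
    rw [hFe, Finset.mem_filter, Finset.mem_Icc] at hl0F
    have hFeEq : Fe = Finset.Icc l0 m := by
      apply Finset.Subset.antisymm
      · intro l hl
        have h1 := Fe.min'_le l hl
        rw [hFe, Finset.mem_filter, Finset.mem_Icc] at hl
        rw [Finset.mem_Icc]
        exact ⟨h1, hl.1.2⟩
      · intro l hl
        rw [Finset.mem_Icc] at hl
        rw [hFe, Finset.mem_filter, Finset.mem_Icc]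
        refine ⟨⟨by omega, hl.2⟩, ?_⟩
        calc n - i' + 2 ≤ b l0 := hl0F.2
          _ ≤ b l := bmono hmono l0 l (by omega) hl.1 (by omega)
    have hecard : e = m + 1 - l0 := by rw [heFe, hFeEq, Nat.card_Icc]
    have hmem : m + 1 - u ∈ Fe := by
      rw [hFeEq, Finset.mem_Icc]
      omega
    rw [hFe, Finset.mem_filter] at hmem
    have := hmem.2
    omega
  omega

open Polynomial in
noncomputable def Nmat {n : ℕ} (B M : Matrix (Fin n) (Fin n) ℂ) :
    Matrix (Fin n) (Fin n) ℂ[X] :=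
  Matrix.of fun j k => C (B j k) + X * C (M j k)

open Polynomial in
lemma sigma_eq_polyeval {n : ℕ} (B M : Matrix (Fin n) (Fin n) ℂ) (i : Fin n) :
    (fun t : ℂ => sigmaMap n (B + t • M) i)
      = fun t => eval t (C ((-1:ℂ)^(i.val+1)) * (Nmat B M).charpoly.coeff (n - (i.val+1))) := by
  funext t
  have hmap : (Nmat B M).map (evalRingHom t) = B + t • M := by
    ext j k
    rw [Matrix.map_apply]
    rw [show Nmat B M j k = C (B j k) + X * C (M j k) from rfl]
    rw [show (B + t • M) j k = B j k + t * M j k from rfl]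
    simp only [coe_evalRingHom, eval_add, eval_mul, eval_C, eval_X]
    try ring
  show (-1:ℂ)^(i.val+1) * (B + t • M).charpoly.coeff (n - (i.val+1)) = _
  rw [← hmap, Matrix.charpoly_map, Polynomial.coeff_map, eval_mul, eval_C]
  rfl

lemma zeros_bound {n : ℕ} {F1 : Finset ℕ} (hF1 : F1 ⊆ Finset.Icc 2 n)
    {m : ℕ} {b : ℕ → ℕ} (hb1 : b 1 = 1) (hblast : b (m + 1) = n + 1)
    (hmono : ∀ l, 1 ≤ l → l ≤ m → b l < b (l + 1))
    (himage : Finset.Icc 1 n \ F1 = Finset.image b (Finset.Icc 1 m))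
    (hgap : ∀ l, 1 ≤ l → l + 1 ≤ m → b (l + 1) - b l ≤ b (l + 2) - b (l + 1))
    (B : Matrix (Fin n) (Fin n) ℂ)
    (hB : ∀ i k : Fin n, B i k = if (k.val + 1) ∈ F1 ∧ i.val + 1 = k.val then 1 else 0)
    (σ : Equiv.Perm (Fin n)) (S : Finset (Fin n)) (hσS : ∀ j ∈ S, σ j ∈ S)
    (hpos : 0 < S.card) :
    1 + ((Finset.Icc 1 n \ F1) ∩ Finset.Icc (n - S.card + 2) n).card
      ≤ (S.filter (fun j => B (σ j) j = 0)).card := by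
  classical
  set Sn := S.image (fun j : Fin n => j.val + 1) with hSn
  have hScard : Sn.card = S.card := by
    rw [hSn]
    exact Finset.card_image_of_injective _ (fun x y h => Fin.ext (by omega))
  have hSsub : Sn ⊆ Finset.Icc 1 n := by
    intro a ha
    rw [hSn, Finset.mem_image] at ha
    obtain ⟨j, _, rfl⟩ := ha
    rw [Finset.mem_Icc]
    exact ⟨by omega, j.isLt⟩
  have hA := lemA hF1 hb1 hblast hmono himage hgap Sn hSsub (by omega)
  rw [hScard] at hA
  -- goods inject into links
  have hgoods : (S.filter (fun j => ¬ B (σ j) j = 0)).card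
      ≤ (Sn.filter (fun a => a ∈ F1 ∧ a - 1 ∈ Sn)).card := by
    refine Finset.card_le_card_of_injOn (fun j => j.val + 1) ?_ ?_
    · intro j hj
      rw [Finset.mem_coe, Finset.mem_filter] at hj
      have hcond : (j.val + 1) ∈ F1 ∧ (σ j).val + 1 = j.val := by
        by_contra hc
        exact hj.2 (by rw [hB, if_neg hc])
      rw [Finset.mem_coe, Finset.mem_filter]
      refine ⟨Finset.mem_image_of_mem _ hj.1, hcond.1, ?_⟩
      have : (σ j).val + 1 = j.val + 1 - 1 := by omega
      rw [← this]
      exact Finset.mem_image_of_mem _ (hσS j hj.1)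
    · intro j _ j' _ h
      exact Fin.ext (by simpa using h)
  have hparts : (S.filter (fun j => B (σ j) j = 0)).card
      + (S.filter (fun j => ¬ B (σ j) j = 0)).card = S.card :=
    Finset.card_filter_add_card_filter_not (p := fun j => B (σ j) j = 0)
  omega

open Polynomial in
lemma X_pow_dvd_Q {n : ℕ} {F1 : Finset ℕ} (hF1 : F1 ⊆ Finset.Icc 2 n)
    {m : ℕ} {b : ℕ → ℕ} (hb1 : b 1 = 1) (hblast : b (m + 1) = n + 1)
    (hmono : ∀ l, 1 ≤ l → l ≤ m → b l < b (l + 1))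
    (himage : Finset.Icc 1 n \ F1 = Finset.image b (Finset.Icc 1 m))
    (hgap : ∀ l, 1 ≤ l → l + 1 ≤ m → b (l + 1) - b l ≤ b (l + 2) - b (l + 1))
    (B : Matrix (Fin n) (Fin n) ℂ)
    (hB : ∀ i k : Fin n, B i k = if (k.val + 1) ∈ F1 ∧ i.val + 1 = k.val then 1 else 0)
    (M : Matrix (Fin n) (Fin n) ℂ) (i' : ℕ) (hi1 : 1 ≤ i') (hi2 : i' ≤ n) :
    (X : ℂ[X]) ^ (1 + ((Finset.Icc 1 n \ F1) ∩ Finset.Icc (n - i' + 2) n).card)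
      ∣ (Nmat B M).charpoly.coeff (n - i') := by
  classical
  set dd := 1 + ((Finset.Icc 1 n \ F1) ∩ Finset.Icc (n - i' + 2) n).card with hdd
  rw [charpoly_coeff_expand]
  refine Finset.dvd_sum fun σ _ => Dvd.dvd.mul_left (Finset.dvd_sum fun T hT => ?_) _
  rw [Finset.mem_powersetCard] at hT
  by_cases hfix : ∀ j ∈ T, σ j = j
  case neg =>
    push_neg at hfix
    obtain ⟨j, hj, hne⟩ := hfix
    have hzero : (∏ j ∈ T, if σ j = j then (1:ℂ[X]) else 0) = 0 :=
      Finset.prod_eq_zero hj (if_neg hne)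
    rw [hzero, zero_mul]
    exact dvd_zero _
  case pos =>
    set S := Finset.univ \ T with hSdef
    have hcardS : S.card = i' := by
      rw [hSdef, Finset.card_sdiff_of_subset (Finset.subset_univ T), hT.2, Finset.card_univ,
        Fintype.card_fin]
      omega
    have hσS : ∀ j ∈ S, σ j ∈ S := by
      intro j hj
      rw [hSdef, Finset.mem_sdiff] at hj ⊢
      refine ⟨Finset.mem_univ _, fun hc => ?_⟩
      have h2 := σ.injective (hfix _ hc)
      rw [h2] at hc
      exact hj.2 hc
    set Z := S.filter (fun j => B (σ j) j = 0) with hZ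
    have hzb := zeros_bound hF1 hb1 hblast hmono himage hgap B hB σ S hσS (by omega)
    rw [hcardS] at hzb
    have h1 : (X : ℂ[X]) ^ Z.card ∣ ∏ j ∈ Z, -(Nmat B M (σ j) j) := by
      rw [← Finset.prod_const]
      refine Finset.prod_dvd_prod_of_dvd _ _ fun j hj => ?_
      rw [hZ, Finset.mem_filter] at hj
      have hN : Nmat B M (σ j) j = X * C (M (σ j) j) := by
        rw [show Nmat B M (σ j) j = C (B (σ j) j) + X * C (M (σ j) j) from rfl, hj.2]
        simp
      rw [hN]
      exact dvd_neg.mpr (dvd_mul_right X _)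
    have h2 : ∏ j ∈ Z, -(Nmat B M (σ j) j) ∣ ∏ j ∈ S, -(Nmat B M (σ j) j) :=
      Finset.prod_dvd_prod_of_subset Z S _ (Finset.filter_subset _ _)
    calc (X:ℂ[X])^dd ∣ (X:ℂ[X])^Z.card := pow_dvd_pow _ (by rw [hZ]; omega)
      _ ∣ ∏ j ∈ Z, -(Nmat B M (σ j) j) := h1
      _ ∣ ∏ j ∈ S, -(Nmat B M (σ j) j) := h2
      _ ∣ _ := dvd_mul_left _ _

open Polynomial in
lemma part_one {n : ℕ} {F1 : Finset ℕ} (hF1 : F1 ⊆ Finset.Icc 2 n)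
    {m : ℕ} {b : ℕ → ℕ} (hb1 : b 1 = 1) (hblast : b (m + 1) = n + 1)
    (hmono : ∀ l, 1 ≤ l → l ≤ m → b l < b (l + 1))
    (himage : Finset.Icc 1 n \ F1 = Finset.image b (Finset.Icc 1 m))
    (hgap : ∀ l, 1 ≤ l → l + 1 ≤ m → b (l + 1) - b l ≤ b (l + 2) - b (l + 1))
    (B : Matrix (Fin n) (Fin n) ℂ)
    (hB : ∀ i k : Fin n, B i k = if (k.val + 1) ∈ F1 ∧ i.val + 1 = k.val then 1 else 0)
    (i : Fin n) (M : Matrix (Fin n) (Fin n) ℂ) (k : ℕ)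
    (hk : k < 1 + ((Finset.Icc 1 n \ F1) ∩ Finset.Icc (n - (i.val + 1) + 2) n).card) :
    iteratedDeriv k (fun t : ℂ => sigmaMap n (B + t • M) i) 0 = 0 := by
  rw [sigma_eq_polyeval, iteratedDeriv_polyeval_zero, coeff_C_mul]
  have hdvd := X_pow_dvd_Q hF1 hb1 hblast hmono himage hgap B hB M (i.val + 1)
    (by omega) i.isLt
  rw [Polynomial.X_pow_dvd_iff.mp hdvd k hk]
  ring

section Sharp

instance instDecChain (F1 : Finset ℕ) (x : ℕ) :
    DecidablePred (fun y => ∀ z ∈ Finset.Icc (x+1) y, z ∈ F1) :=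
  fun _ => Finset.decidableDforallFinset

def topfD (n : ℕ) (F1 : Finset ℕ) (x : ℕ) : ℕ :=
  ((Finset.Icc x n).filter (fun y => ∀ z ∈ Finset.Icc (x+1) y, z ∈ F1)).sup id

def S0nD (n i' : ℕ) : Finset ℕ := Finset.Icc (n - i' + 1) n

def BotSD (n : ℕ) (F1 : Finset ℕ) (i' : ℕ) : Finset ℕ :=
  (S0nD n i').filter (fun x => ¬(x ∈ F1 ∧ x - 1 ∈ S0nD n i'))

def S0finD (n i' : ℕ) : Finset (Fin n) := Finset.univ.filter (fun j => n - i' ≤ j.val)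

noncomputable def MmD (n : ℕ) (F1 : Finset ℕ) (i' : ℕ) : Matrix (Fin n) (Fin n) ℂ :=
  Matrix.of fun j k =>
    if (k.val + 1) ∈ BotSD n F1 i' ∧ j.val + 1 = topfD n F1 (k.val + 1) then 1 else 0

lemma topf_le (n : ℕ) (F1 : Finset ℕ) (x : ℕ) : topfD n F1 x ≤ n := by
  unfold topfD
  exact Finset.sup_le fun y hy => (Finset.mem_Icc.mp (Finset.mem_filter.mp hy).1).2

lemma topf_spec (n : ℕ) (F1 : Finset ℕ) (x : ℕ) (hx : x ≤ n) :
    x ≤ topfD n F1 x ∧ (∀ z ∈ Finset.Icc (x+1) (topfD n F1 x), z ∈ F1)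
      ∧ (topfD n F1 x = n ∨ (topfD n F1 x + 1) ∉ F1) := by
  set fset := (Finset.Icc x n).filter (fun y => ∀ z ∈ Finset.Icc (x+1) y, z ∈ F1) with hfset
  have hdef : topfD n F1 x = fset.sup id := rfl
  have hxmem : x ∈ fset := by
    rw [hfset, Finset.mem_filter, Finset.mem_Icc]
    exact ⟨⟨le_rfl, hx⟩, fun z hz => by rw [Finset.mem_Icc] at hz; omega⟩
  have hle : x ≤ topfD n F1 x := by rw [hdef]; exact Finset.le_sup (f := id) hxmem
  obtain ⟨y, hy, hsup⟩ := Finset.exists_mem_eq_sup fset ⟨x, hxmem⟩ id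
  have htop : topfD n F1 x = y := by rw [hdef]; exact hsup
  have hy' := hy
  rw [hfset, Finset.mem_filter, Finset.mem_Icc] at hy'
  refine ⟨hle, by rw [htop]; exact hy'.2, ?_⟩
  by_contra hcon
  push_neg at hcon
  obtain ⟨hne, hmem⟩ := hcon
  have hlt : topfD n F1 x < n := lt_of_le_of_ne (topf_le n F1 x) hne
  have : topfD n F1 x + 1 ∈ fset := by
    rw [hfset, Finset.mem_filter, Finset.mem_Icc]
    refine ⟨⟨by omega, by omega⟩, fun z hz => ?_⟩
    rw [Finset.mem_Icc] at hz
    rcases Nat.lt_or_ge z (topfD n F1 x + 1) with h | h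
    · exact hy'.2 z (by rw [Finset.mem_Icc]; omega)
    · have : z = topfD n F1 x + 1 := by omega
      rw [this]; exact hmem
  have h3 := Finset.le_sup (f := id) this
  show False
  have h2 : topfD n F1 x + 1 ≤ topfD n F1 x := by rw [hdef]; exact h3
  omega

lemma bot_sub (n : ℕ) (F1 : Finset ℕ) (i' : ℕ) {x : ℕ} (hx : x ∈ BotSD n F1 i') :
    n - i' + 1 ≤ x ∧ x ≤ n := by
  have := Finset.filter_subset _ _ hx
  rw [S0nD, Finset.mem_Icc] at this
  exact this

lemma chainsep (n : ℕ) (F1 : Finset ℕ) (i' : ℕ) {x x' : ℕ}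
    (hx : x ∈ BotSD n F1 i') (hx' : x' ∈ BotSD n F1 i') (hlt : x < x') :
    topfD n F1 x < x' := by
  by_contra hcon
  push_neg at hcon
  have hxn := bot_sub n F1 i' hx
  have hx'n := bot_sub n F1 i' hx'
  have hF : x' ∈ F1 := (topf_spec n F1 x (by omega)).2.1 x' (by rw [Finset.mem_Icc]; omega)
  rw [BotSD, Finset.mem_filter] at hx'
  exact hx'.2 ⟨hF, by rw [S0nD, Finset.mem_Icc]; omega⟩

lemma botcard (n : ℕ) (F1 : Finset ℕ) (i' : ℕ) (hi1 : 1 ≤ i') (hi2 : i' ≤ n)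
    (hF1 : F1 ⊆ Finset.Icc 2 n) :
    (BotSD n F1 i').card
      = 1 + ((Finset.Icc 1 n \ F1) ∩ Finset.Icc (n - i' + 2) n).card := by
  classical
  have h1 : (Finset.Icc 1 n \ F1) ∩ Finset.Icc (n - i' + 2) n
      = (Finset.Icc (n - i' + 2) n).filter (fun a => a ∉ F1) := by
    ext a
    simp only [Finset.mem_inter, Finset.mem_sdiff, Finset.mem_filter, Finset.mem_Icc]
    constructor
    · rintro ⟨⟨_, h2⟩, h3⟩; exact ⟨h3, h2⟩
    · rintro ⟨h2, h3⟩; exact ⟨⟨⟨by omega, h2.2⟩, h3⟩, h2⟩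
  have h2 : BotSD n F1 i'
      = insert (n - i' + 1) ((Finset.Icc (n - i' + 2) n).filter (fun a => a ∉ F1)) := by
    ext x
    simp only [BotSD, S0nD, Finset.mem_filter, Finset.mem_Icc, Finset.mem_insert]
    constructor
    · rintro ⟨⟨hx1, hx2⟩, hx3⟩
      rcases Nat.lt_or_ge x (n - i' + 2) with h | h
      · left; omega
      · right
        refine ⟨⟨h, hx2⟩, fun hF => hx3 ⟨hF, by omega, by omega⟩⟩
    · rintro (rfl | ⟨⟨h1', h2'⟩, h3'⟩)
      · refine ⟨⟨le_rfl, by omega⟩, fun hcon => ?_⟩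
        omega
      · exact ⟨⟨by omega, h2'⟩, fun hcon => h3' hcon.1⟩
  rw [h1, h2, Finset.card_insert_of_notMem (by
    simp only [Finset.mem_filter, Finset.mem_Icc]
    rintro ⟨⟨h, _⟩, _⟩
    omega)]
  omega

end Sharp


def f0D (n : ℕ) (F1 : Finset ℕ) (i' : ℕ) : Fin n → Fin n := fun j =>
  if (j.val + 1) ∈ BotSD n F1 i' then
    ⟨topfD n F1 (j.val + 1) - 1, by have h1 := topf_le n F1 (j.val+1); have := j.isLt; omega⟩
  else if n - i' ≤ j.val then ⟨j.val - 1, by have := j.isLt; omega⟩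
  else j

lemma S0n_mem (n i' : ℕ) {x : ℕ} : x ∈ S0nD n i' ↔ n - i' + 1 ≤ x ∧ x ≤ n := by
  rw [S0nD, Finset.mem_Icc]

lemma notbot_spec (n : ℕ) (F1 : Finset ℕ) (i' : ℕ) {x : ℕ}
    (hx1 : n - i' + 1 ≤ x) (hx2 : x ≤ n) (hx3 : x ∉ BotSD n F1 i') :
    x ∈ F1 ∧ x - 1 ∈ S0nD n i' := by
  have hxS : x ∈ S0nD n i' := (S0n_mem n i').mpr ⟨hx1, hx2⟩
  rw [BotSD, Finset.mem_filter] at hx3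
  by_contra hcon
  exact hx3 ⟨hxS, fun h => hcon h⟩

lemma f0_fix (n : ℕ) (F1 : Finset ℕ) (i' : ℕ) {j : Fin n} (hj : j.val < n - i') :
    f0D n F1 i' j = j := by
  unfold f0D
  rw [if_neg, if_neg]
  · omega
  · intro hcon
    have := (bot_sub n F1 i' hcon).1
    omega

lemma f0_bot (n : ℕ) (F1 : Finset ℕ) (i' : ℕ) {j : Fin n}
    (hj : (j.val + 1) ∈ BotSD n F1 i') :
    (f0D n F1 i' j).val + 1 = topfD n F1 (j.val + 1) := by
  unfold f0D
  rw [if_pos hj]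
  have h1 := (topf_spec n F1 (j.val + 1) (by have := (bot_sub n F1 i' hj).2; omega)).1
  simp only []
  omega

lemma f0_mid (n : ℕ) (F1 : Finset ℕ) (i' : ℕ) {j : Fin n}
    (h1 : n - i' ≤ j.val) (h2 : (j.val + 1) ∉ BotSD n F1 i') :
    (f0D n F1 i' j).val = j.val - 1 := by
  unfold f0D
  rw [if_neg h2, if_pos h1]

lemma midval_ge_one (n : ℕ) (F1 : Finset ℕ) (i' : ℕ) (hF1 : F1 ⊆ Finset.Icc 2 n) {j : Fin n}
    (h1 : n - i' ≤ j.val) (h2 : (j.val + 1) ∉ BotSD n F1 i') :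
    1 ≤ j.val ∧ (j.val + 1) ∈ F1 ∧ n - i' + 1 ≤ j.val := by
  have hns := notbot_spec n F1 i' (by omega) (by have := j.isLt; omega) h2
  have hmem := hF1 hns.1
  rw [Finset.mem_Icc] at hmem
  have hs := (S0n_mem n i').mp hns.2
  refine ⟨by omega, hns.1, by omega⟩

lemma f0_inj (n : ℕ) (F1 : Finset ℕ) (i' : ℕ) (hF1 : F1 ⊆ Finset.Icc 2 n) :
    Function.Injective (f0D n F1 i') := by
  intro j j' heq
  have hval := congrArg Fin.val heq
  have hjlt := j.isLt
  have hj'lt := j'.isLt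
  by_cases hb : (j.val + 1) ∈ BotSD n F1 i' <;>
    by_cases hb' : (j'.val + 1) ∈ BotSD n F1 i'
  · -- bot bot
    have e1 := f0_bot n F1 i' hb
    have e2 := f0_bot n F1 i' hb'
    have htt : topfD n F1 (j.val + 1) = topfD n F1 (j'.val + 1) := by omega
    rcases lt_trichotomy (j.val + 1) (j'.val + 1) with h | h | h
    · have hc := chainsep n F1 i' hb hb' h
      have := (topf_spec n F1 (j'.val + 1) (by have := (bot_sub n F1 i' hb').2; omega)).1
      omega
    · exact Fin.ext (by omega)
    · have hc := chainsep n F1 i' hb' hb h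
      have := (topf_spec n F1 (j.val + 1) (by have := (bot_sub n F1 i' hb).2; omega)).1
      omega
  · -- j bot, j' not bot
    exfalso
    have e1 := f0_bot n F1 i' hb
    have hx := bot_sub n F1 i' hb
    have htf := (topf_spec n F1 (j.val + 1) (by omega))
    by_cases hm' : n - i' ≤ j'.val
    · -- j' mid
      have e2 := f0_mid n F1 i' hm' hb'
      have hg := midval_ge_one n F1 i' hF1 hm' hb'
      have htv : topfD n F1 (j.val + 1) = j'.val := by omega
      rcases htf.2.2 with h | h
      · have := hF1 hg.2.1
        rw [Finset.mem_Icc] at this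
        omega
      · exact h (by rw [htv]; exact hg.2.1)
    · -- j' fix
      have e2 : f0D n F1 i' j' = j' := f0_fix n F1 i' (by omega)
      rw [e2] at hval
      have := htf.1
      omega
  · -- j not bot, j' bot (symmetric)
    exfalso
    have e1 := f0_bot n F1 i' hb'
    have hx := bot_sub n F1 i' hb'
    have htf := (topf_spec n F1 (j'.val + 1) (by omega))
    by_cases hm : n - i' ≤ j.val
    · have e2 := f0_mid n F1 i' hm hb
      have hg := midval_ge_one n F1 i' hF1 hm hb
      have htv : topfD n F1 (j'.val + 1) = j.val := by omega
      rcases htf.2.2 with h | h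
      · have := hF1 hg.2.1
        rw [Finset.mem_Icc] at this
        omega
      · exact h (by rw [htv]; exact hg.2.1)
    · have e2 : f0D n F1 i' j = j := f0_fix n F1 i' (by omega)
      rw [e2] at hval
      have := htf.1
      omega
  · -- neither bot
    by_cases hm : n - i' ≤ j.val <;> by_cases hm' : n - i' ≤ j'.val
    · have e1 := f0_mid n F1 i' hm hb
      have e2 := f0_mid n F1 i' hm' hb'
      have hg := midval_ge_one n F1 i' hF1 hm hb
      have hg' := midval_ge_one n F1 i' hF1 hm' hb'
      exact Fin.ext (by omega)
    · exfalso
      have e1 := f0_mid n F1 i' hm hb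
      have e2 : f0D n F1 i' j' = j' := f0_fix n F1 i' (by omega)
      have hg := midval_ge_one n F1 i' hF1 hm hb
      rw [e2] at hval
      omega
    · exfalso
      have e1 := f0_mid n F1 i' hm' hb'
      have e2 : f0D n F1 i' j = j := f0_fix n F1 i' (by omega)
      have hg := midval_ge_one n F1 i' hF1 hm' hb'
      rw [e2] at hval
      omega
    · have e1 : f0D n F1 i' j = j := f0_fix n F1 i' (by omega)
      have e2 : f0D n F1 i' j' = j' := f0_fix n F1 i' (by omega)
      rw [e1, e2] at heq
      exact heq

lemma S0fin_card (n i' : ℕ) (hi1 : 1 ≤ i') (hi2 : i' ≤ n) : (S0finD n i').card = i' := by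
  have hn : 0 < n := by omega
  have h : (S0finD n i').card = (Finset.Ico (n - i') n).card := by
    apply Finset.card_nbij' (i := fun j => j.val)
      (j := fun b => if h : b < n then (⟨b, h⟩ : Fin n) else ⟨0, hn⟩)
    · intro a ha
      simp only [Finset.mem_coe, S0finD, Finset.mem_filter] at ha
      rw [Finset.mem_coe, Finset.mem_Ico]
      exact ⟨ha.2, a.isLt⟩
    · intro a ha
      rw [Finset.mem_coe, Finset.mem_Ico] at ha
      beta_reduce
      rw [dif_pos ha.2, S0finD, Finset.mem_coe, Finset.mem_filter]
      exact ⟨Finset.mem_univ _, ha.1⟩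
    · intro a ha
      beta_reduce
      rw [dif_pos a.isLt]
    · intro a ha
      rw [Finset.mem_coe, Finset.mem_Ico] at ha
      beta_reduce
      rw [dif_pos ha.2]
  rw [h, Nat.card_Ico]
  omega


lemma ite01_ne {p : Prop} [Decidable p] (h : ¬ p) : (if p then (1:ℂ) else 0) ≠ 1 := by
  rw [if_neg h]; exact zero_ne_one

lemma Mm_apply (n : ℕ) (F1 : Finset ℕ) (i' : ℕ) (r c : Fin n) :
    MmD n F1 i' r c
      = if (c.val + 1) ∈ BotSD n F1 i' ∧ r.val + 1 = topfD n F1 (c.val + 1) then 1 else 0 := rfl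

lemma unique_sigma (n : ℕ) (F1 : Finset ℕ) (i' : ℕ) (hi1 : 1 ≤ i') (hi2 : i' ≤ n)
    (hF1 : F1 ⊆ Finset.Icc 2 n)
    (B : Matrix (Fin n) (Fin n) ℂ)
    (hB : ∀ r c : Fin n, B r c = if (c.val + 1) ∈ F1 ∧ r.val + 1 = c.val then 1 else 0)
    (σ : Equiv.Perm (Fin n)) (S : Finset (Fin n))
    (hfixout : ∀ j, j ∉ S → σ j = j) (hσS : ∀ j ∈ S, σ j ∈ S)
    (hslots : ∀ j ∈ S, B (σ j) j = 1 ∨ MmD n F1 i' (σ j) j = 1)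
    (hz : (S.filter (fun j => B (σ j) j = 0)).card = (BotSD n F1 i').card)
    (hcard : S.card = i') :
    S = S0finD n i' ∧ ∀ j, σ j = f0D n F1 i' j := by
  classical
  have hMcond : ∀ j ∈ S, B (σ j) j = 0 →
      ((j.val + 1) ∈ BotSD n F1 i' ∧ (σ j).val + 1 = topfD n F1 (j.val + 1)) := by
    intro j hj h0
    rcases hslots j hj with h | h
    · rw [h0] at h; exact absurd h zero_ne_one
    · rw [Mm_apply] at h
      by_contra hc
      exact ite01_ne hc h
  have hBcond : ∀ j ∈ S, B (σ j) j ≠ 0 →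
      ((j.val + 1) ∈ F1 ∧ (σ j).val + 1 = j.val) := by
    intro j hj h0
    by_contra hc
    exact h0 (by rw [hB, if_neg hc])
  have hSsub : ∀ j ∈ S, n - i' ≤ j.val := by
    by_contra hcon
    push_neg at hcon
    obtain ⟨jb, hjb, hjblt⟩ := hcon
    set V := S.filter (fun j => j.val < n - i') with hV
    have hVne : V.Nonempty := ⟨jb, by rw [hV, Finset.mem_filter]; exact ⟨hjb, hjblt⟩⟩
    set jm := V.min' hVne with hjm
    have hjmV : jm ∈ V := V.min'_mem hVne
    rw [hV, Finset.mem_filter] at hjmV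
    by_cases hBz : B (σ jm) jm = 0
    · have := (bot_sub n F1 i' (hMcond jm hjmV.1 hBz).1).1
      omega
    · have hc := hBcond jm hjmV.1 hBz
      have hσm : σ jm ∈ V := by
        rw [hV, Finset.mem_filter]
        exact ⟨hσS jm hjmV.1, by omega⟩
      have := V.min'_le _ hσm
      rw [← hjm] at this
      rw [Fin.le_def] at this
      omega
  have hScard' : (S0finD n i').card = i' := S0fin_card n i' hi1 hi2
  have hSeq : S = S0finD n i' := by
    apply Finset.eq_of_subset_of_card_le
    · intro j hj
      rw [S0finD, Finset.mem_filter]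
      exact ⟨Finset.mem_univ _, hSsub j hj⟩
    · omega
  set Zf := S.filter (fun j => B (σ j) j = 0) with hZf
  have himg : Zf.image (fun j => j.val + 1) = BotSD n F1 i' := by
    apply Finset.eq_of_subset_of_card_le
    · intro a ha
      rw [Finset.mem_image] at ha
      obtain ⟨j, hj, rfl⟩ := ha
      rw [hZf, Finset.mem_filter] at hj
      exact (hMcond j hj.1 hj.2).1
    · rw [Finset.card_image_of_injective _ (fun x y h => Fin.ext (by omega))]
      omega
  have hbot_iff : ∀ j ∈ S, ((j.val + 1) ∈ BotSD n F1 i' ↔ B (σ j) j = 0) := by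
    intro j hj
    constructor
    · intro hbt
      rw [← himg, Finset.mem_image] at hbt
      obtain ⟨j', hj', hval⟩ := hbt
      have : j' = j := Fin.ext (by omega)
      rw [this] at hj'
      rw [hZf, Finset.mem_filter] at hj'
      exact hj'.2
    · intro h0
      exact (hMcond j hj h0).1
  refine ⟨hSeq, fun j => ?_⟩
  by_cases hjS : j ∈ S
  · by_cases hBz : B (σ j) j = 0
    · have hc := hMcond j hjS hBz
      have hf := f0_bot n F1 i' hc.1
      exact Fin.ext (by omega)
    · have hc := hBcond j hjS hBz
      have hnb : (j.val + 1) ∉ BotSD n F1 i' := fun hbt => hBz ((hbot_iff j hjS).mp hbt)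
      have hf := f0_mid n F1 i' (hSsub j hjS) hnb
      have hj1 := (hF1 hc.1)
      rw [Finset.mem_Icc] at hj1
      exact Fin.ext (by omega)
  · rw [hfixout j hjS]
    rw [hSeq, S0finD, Finset.mem_filter] at hjS
    push_neg at hjS
    exact (f0_fix n F1 i' (by
      have := hjS (Finset.mem_univ _)
      omega)).symm


lemma factor_form (β μ : ℂ) (hβ : β = 0 ∨ β = 1) (hμ : μ = 0 ∨ μ = 1)
    (hnot : ¬(β = 1 ∧ μ = 1)) :
    C β + X * C μ = C (β + μ) * X ^ (if β = 0 then 1 else 0) := by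
  rcases hβ with rfl | rfl <;> rcases hμ with rfl | rfl <;> simp_all

lemma term_coeff_eq (n : ℕ) (B M : Matrix (Fin n) (Fin n) ℂ)
    (hB01 : ∀ r c, B r c = 0 ∨ B r c = 1)
    (hM01 : ∀ r c, M r c = 0 ∨ M r c = 1)
    (hdisj : ∀ r c, ¬(B r c = 1 ∧ M r c = 1))
    (σ : Equiv.Perm (Fin n)) (T : Finset (Fin n)) (hfix : ∀ j ∈ T, σ j = j) (dd : ℕ) :
    ((∏ j ∈ T, if σ j = j then (1:ℂ[X]) else 0) *
      ∏ j ∈ Finset.univ \ T, -(Nmat B M (σ j) j)).coeff dd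
    = (if dd = ((Finset.univ \ T).filter (fun j => B (σ j) j = 0)).card then
        (-1)^(Finset.univ \ T).card * ∏ j ∈ Finset.univ \ T, (B (σ j) j + M (σ j) j)
      else 0) := by
  classical
  set S := Finset.univ \ T with hS
  have h1 : (∏ j ∈ T, if σ j = j then (1:ℂ[X]) else 0) = 1 :=
    Finset.prod_eq_one fun j hj => by rw [if_pos (hfix j hj)]
  rw [h1, one_mul]
  have h2 : ∀ j ∈ S, -(Nmat B M (σ j) j)
      = (-1) * (C (B (σ j) j + M (σ j) j) * X ^ (if B (σ j) j = 0 then 1 else 0)) := by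
    intro j _
    rw [show Nmat B M (σ j) j = C (B (σ j) j) + X * C (M (σ j) j) from rfl]
    rw [factor_form _ _ (hB01 _ _) (hM01 _ _) (hdisj _ _)]
    ring
  rw [Finset.prod_congr rfl h2, Finset.prod_mul_distrib, Finset.prod_mul_distrib,
    Finset.prod_const, Finset.prod_pow_eq_pow_sum, ← map_prod,
    show (∑ j ∈ S, if B (σ j) j = 0 then 1 else 0)
      = (S.filter (fun j => B (σ j) j = 0)).card from (Finset.card_filter _ _).symm]
  rw [show ((-1:ℂ[X])^S.card * (C (∏ j ∈ S, (B (σ j) j + M (σ j) j))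
      * X ^ (S.filter (fun j => B (σ j) j = 0)).card))
    = C ((-1)^S.card * ∏ j ∈ S, (B (σ j) j + M (σ j) j))
      * X ^ (S.filter (fun j => B (σ j) j = 0)).card by
      rw [map_mul, map_pow, map_neg, map_one]; ring]
  rw [coeff_C_mul, coeff_X_pow]
  split <;> simp

lemma Qcoeff_ne (n : ℕ) (F1 : Finset ℕ) (hF1 : F1 ⊆ Finset.Icc 2 n)
    (B : Matrix (Fin n) (Fin n) ℂ)
    (hB : ∀ r c : Fin n, B r c = if (c.val + 1) ∈ F1 ∧ r.val + 1 = c.val then 1 else 0)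
    (i' : ℕ) (hi1 : 1 ≤ i') (hi2 : i' ≤ n) :
    ((Nmat B (MmD n F1 i')).charpoly.coeff (n - i')).coeff ((BotSD n F1 i').card) ≠ 0 := by
  classical
  set M := MmD n F1 i' with hM
  set dd := (BotSD n F1 i').card with hdd
  have hB01 : ∀ r c, B r c = 0 ∨ B r c = 1 := fun r c => by
    rw [hB]; split
    · right; rfl
    · left; rfl
  have hM01 : ∀ r c, M r c = 0 ∨ M r c = 1 := fun r c => by
    rw [hM, Mm_apply]; split
    · right; rfl
    · left; rfl
  have hdisj : ∀ r c, ¬(B r c = 1 ∧ M r c = 1) := by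
    rintro r c ⟨h1, h2⟩
    rw [hB] at h1; rw [hM, Mm_apply] at h2
    have hc1 : (c.val+1) ∈ F1 ∧ r.val + 1 = c.val := by
      by_contra hc; rw [if_neg hc] at h1; exact zero_ne_one h1
    have hc2 : (c.val+1) ∈ BotSD n F1 i' ∧ r.val + 1 = topfD n F1 (c.val+1) := by
      by_contra hc; rw [if_neg hc] at h2; exact zero_ne_one h2
    have := (topf_spec n F1 (c.val+1) (by have := c.isLt; omega)).1
    omega
  have hinj := f0_inj n F1 i' hF1
  set σ0 : Equiv.Perm (Fin n) :=
    Equiv.ofBijective _ (Finite.injective_iff_bijective.mp hinj) with hσ0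
  have hσ0app : ∀ j, σ0 j = f0D n F1 i' j := fun j => rfl
  set T0 : Finset (Fin n) := Finset.univ \ S0finD n i' with hT0
  have hcomp : Finset.univ \ T0 = S0finD n i' := by
    rw [hT0]; exact Finset.sdiff_sdiff_eq_self (Finset.subset_univ _)
  have hS0card : (S0finD n i').card = i' := S0fin_card n i' hi1 hi2
  have hT0card : T0.card = n - i' := by
    rw [hT0, Finset.card_sdiff_of_subset (Finset.subset_univ _), Finset.card_univ,
      Fintype.card_fin, hS0card]
  have hT0mem : T0 ∈ Finset.powersetCard (n - i') Finset.univ :=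
    Finset.mem_powersetCard.mpr ⟨Finset.subset_univ _, hT0card⟩
  have hmemS0 : ∀ j : Fin n, j ∈ S0finD n i' ↔ n - i' ≤ j.val := by
    intro j; rw [S0finD, Finset.mem_filter]; simp
  have hslot0 : ∀ j ∈ S0finD n i',
      (B (σ0 j) j = 0 ∧ M (σ0 j) j = 1 ∧ (j.val+1) ∈ BotSD n F1 i') ∨
      (B (σ0 j) j = 1 ∧ M (σ0 j) j = 0 ∧ (j.val+1) ∉ BotSD n F1 i') := by
    intro j hj
    rw [hmemS0] at hj
    by_cases hbt : (j.val+1) ∈ BotSD n F1 i'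
    · left
      have hf := f0_bot n F1 i' hbt
      have htp := (topf_spec n F1 (j.val+1) (by have := j.isLt; omega)).1
      have hσv : (σ0 j).val + 1 = topfD n F1 (j.val+1) := by rw [hσ0app]; exact hf
      refine ⟨?_, ?_, hbt⟩
      · rw [hB, if_neg]; rintro ⟨-, hc⟩; omega
      · rw [hM, Mm_apply, if_pos ⟨hbt, hσv⟩]
    · right
      have hg := midval_ge_one n F1 i' hF1 hj hbt
      have hf := f0_mid n F1 i' hj hbt
      have hσv : (σ0 j).val = j.val - 1 := by rw [hσ0app]; exact hf
      refine ⟨?_, ?_, hbt⟩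
      · rw [hB, if_pos ⟨hg.2.1, by omega⟩]
      · rw [hM, Mm_apply, if_neg]; rintro ⟨hc, -⟩; exact hbt hc
  have hzcard : ((S0finD n i').filter (fun j => B (σ0 j) j = 0)).card = dd := by
    rw [hdd]
    apply Finset.card_bij (i := fun j _ => j.val + 1)
    · intro j hj
      rw [Finset.mem_filter] at hj
      rcases hslot0 j hj.1 with h | h
      · exact h.2.2
      · rw [h.1] at hj; exact absurd hj.2 one_ne_zero
    · intro j hj j' hj' h
      exact Fin.ext (by omega)
    · intro x hx
      have hxb := bot_sub n F1 i' hx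
      have hlt : x - 1 < n := by omega
      have hjval : ((⟨x-1, hlt⟩ : Fin n)).val + 1 = x := by simp; omega
      have hjmem : (⟨x-1, hlt⟩ : Fin n) ∈ S0finD n i' := by rw [hmemS0]; simp; omega
      refine ⟨⟨x-1, hlt⟩, ?_, hjval⟩
      rw [Finset.mem_filter]
      rcases hslot0 _ hjmem with h | h
      · exact ⟨hjmem, h.1⟩
      · rw [hjval] at h
        exact absurd hx h.2.2
  have hprod1 : ∏ j ∈ S0finD n i', (B (σ0 j) j + M (σ0 j) j) = 1 := by
    apply Finset.prod_eq_one
    intro j hj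
    rcases hslot0 j hj with h | h
    · rw [h.1, h.2.1]; ring
    · rw [h.1, h.2.1]; ring
  have hfix0 : ∀ j ∈ T0, σ0 j = j := by
    intro j hj
    rw [hT0, Finset.mem_sdiff] at hj
    have hj2 : ¬ (n - i' ≤ j.val) := fun hc => hj.2 ((hmemS0 j).mpr hc)
    rw [hσ0app]
    exact f0_fix n F1 i' (by omega)
  -- classification
  have hclass : ∀ (σ : Equiv.Perm (Fin n)) (T : Finset (Fin n)),
      T ∈ Finset.powersetCard (n - i') Finset.univ →
      ((∏ j ∈ T, if σ j = j then (1:ℂ[X]) else 0) *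
        ∏ j ∈ Finset.univ \ T, -(Nmat B M (σ j) j)).coeff dd ≠ 0 →
      σ = σ0 ∧ T = T0 := by
    intro σ T hT hne
    rw [Finset.mem_powersetCard] at hT
    have hfix : ∀ j ∈ T, σ j = j := by
      by_contra hc
      push_neg at hc
      obtain ⟨j, hj, hjne⟩ := hc
      apply hne
      have hzero : (∏ j ∈ T, if σ j = j then (1:ℂ[X]) else 0) = 0 :=
        Finset.prod_eq_zero hj (if_neg hjne)
      rw [hzero, zero_mul, Polynomial.coeff_zero]
    rw [term_coeff_eq n B M hB01 hM01 hdisj σ T hfix dd] at hne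
    have hScard : (Finset.univ \ T).card = i' := by
      rw [Finset.card_sdiff_of_subset (Finset.subset_univ _), Finset.card_univ,
        Fintype.card_fin, hT.2]
      omega
    split_ifs at hne with hzc
    · have hprodne : ∀ j ∈ Finset.univ \ T, B (σ j) j + M (σ j) j ≠ 0 := by
        intro j hj hzero
        apply hne
        rw [Finset.prod_eq_zero hj hzero, mul_zero]
      have hσS : ∀ j ∈ Finset.univ \ T, σ j ∈ Finset.univ \ T := by
        intro j hj
        rw [Finset.mem_sdiff] at hj ⊢
        refine ⟨Finset.mem_univ _, fun hc => ?_⟩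
        have h2 := σ.injective (hfix _ hc)
        rw [h2] at hc
        exact hj.2 hc
      have hfixout : ∀ j, j ∉ Finset.univ \ T → σ j = j := by
        intro j hj
        rw [Finset.mem_sdiff] at hj
        push_neg at hj
        exact hfix j (hj (Finset.mem_univ _))
      have hslots : ∀ j ∈ Finset.univ \ T, B (σ j) j = 1 ∨ M (σ j) j = 1 := by
        intro j hj
        rcases hB01 (σ j) j with h1 | h1
        · rcases hM01 (σ j) j with h2 | h2
          · exact absurd (by rw [h1, h2]; ring) (hprodne j hj)
          · right; exact h2
        · left; exact h1
      have huniq := unique_sigma n F1 i' hi1 hi2 hF1 B hB σ (Finset.univ \ T)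
        hfixout hσS hslots (by omega) hScard
      constructor
      · exact Equiv.ext fun j => (huniq.2 j).trans (hσ0app j).symm
      · have hTT : T = Finset.univ \ (Finset.univ \ T) :=
          (Finset.sdiff_sdiff_eq_self (Finset.subset_univ T)).symm
        rw [hTT, huniq.1, hT0]
    · exact absurd rfl hne
  -- main computation
  rw [charpoly_coeff_expand, Polynomial.finset_sum_coeff]
  have hterm : ∀ σ : Equiv.Perm (Fin n),
      (((Equiv.Perm.sign σ : ℤ) : ℂ[X]) *
        ∑ T ∈ Finset.powersetCard (n - i') Finset.univ,
          (∏ j ∈ T, if σ j = j then (1:ℂ[X]) else 0) *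
            ∏ j ∈ Finset.univ \ T, -(Nmat B M (σ j) j)).coeff dd
      = ((Equiv.Perm.sign σ : ℤ) : ℂ) *
        ∑ T ∈ Finset.powersetCard (n - i') Finset.univ,
          ((∏ j ∈ T, if σ j = j then (1:ℂ[X]) else 0) *
            ∏ j ∈ Finset.univ \ T, -(Nmat B M (σ j) j)).coeff dd := by
    intro σ
    rw [← Polynomial.C_eq_intCast, Polynomial.coeff_C_mul, Polynomial.finset_sum_coeff]
  rw [Finset.sum_congr rfl (fun σ _ => hterm σ)]
  rw [Finset.sum_eq_single_of_mem σ0 (Finset.mem_univ _) (by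
    intro σ _ hσne
    rw [Finset.sum_eq_zero, mul_zero]
    intro T hT
    by_contra hne
    exact hσne (hclass σ T hT hne).1)]
  rw [Finset.sum_eq_single_of_mem T0 hT0mem (by
    intro T hT hTne
    by_contra hne
    exact hTne (hclass σ0 T hT hne).2)]
  rw [term_coeff_eq n B M hB01 hM01 hdisj σ0 T0 hfix0 dd]
  rw [hcomp]
  rw [if_pos hzcard.symm, hprod1, hS0card, mul_one]
  exact mul_ne_zero (Int.cast_ne_zero.mpr (Units.ne_zero _))
    (pow_ne_zero _ (neg_ne_zero.mpr one_ne_zero))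


lemma part_two {n : ℕ} {F1 : Finset ℕ} (hF1 : F1 ⊆ Finset.Icc 2 n)
    (B : Matrix (Fin n) (Fin n) ℂ)
    (hB : ∀ r c : Fin n, B r c = if (c.val + 1) ∈ F1 ∧ r.val + 1 = c.val then 1 else 0)
    (i : Fin n) :
    ∃ M : Matrix (Fin n) (Fin n) ℂ,
      iteratedDeriv (1 + ((Finset.Icc 1 n \ F1) ∩ Finset.Icc (n - (i.val+1) + 2) n).card)
        (fun t : ℂ => sigmaMap n (B + t • M) i) 0 ≠ 0 := by
  have hi1 : 1 ≤ i.val + 1 := by omega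
  have hi2 : i.val + 1 ≤ n := i.isLt
  refine ⟨MmD n F1 (i.val + 1), ?_⟩
  rw [sigma_eq_polyeval, iteratedDeriv_polyeval_zero, coeff_C_mul]
  rw [← botcard n F1 (i.val + 1) hi1 hi2 hF1]
  refine mul_ne_zero (Nat.cast_ne_zero.mpr (Nat.factorial_ne_zero _)) (mul_ne_zero ?_ ?_)
  · exact pow_ne_zero _ (neg_ne_zero.mpr one_ne_zero)
  · exact Qcoeff_ne n F1 hF1 B hB (i.val + 1) hi1 hi2

/-- with `B` a nilpotent Jordan-form matrix as above, for each `i`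
the function `t ↦ σ_i(B + t M)` vanishes to order at least `d i` at `t = 0` for all
`M`, and there is an `M` for which the vanishing order is exactly `d i`. -/
theorem sigma_vanishing_order (n : ℕ) (F1 : Finset ℕ) (hF1 : F1 ⊆ Finset.Icc 2 n)
    (B : Matrix (Fin n) (Fin n) ℂ)
    (hB : ∀ i k : Fin n, B i k = if (k.val + 1) ∈ F1 ∧ i.val + 1 = k.val then 1 else 0)
    (m : ℕ) (hm : m = (Finset.Icc 1 n \ F1).card)
    (b : ℕ → ℕ) (hb1 : b 1 = 1) (hblast : b (m + 1) = n + 1)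
    (hmono : ∀ l, 1 ≤ l → l ≤ m → b l < b (l + 1))
    (himage : Finset.Icc 1 n \ F1 = Finset.image b (Finset.Icc 1 m))
    (hgap : ∀ l, 1 ≤ l → l + 1 ≤ m → b (l + 1) - b l ≤ b (l + 2) - b (l + 1))
    (d : ℕ → ℕ)
    (hd : ∀ i, d i = 1 + ((Finset.Icc 1 n \ F1) ∩ Finset.Icc (n - i + 2) n).card) :
    ∀ i : Fin n,
      (∀ M : Matrix (Fin n) (Fin n) ℂ, ∀ k, k < d (i.val + 1) →
        iteratedDeriv k (fun t : ℂ => sigmaMap n (B + t • M) i) 0 = 0) ∧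
      (∃ M : Matrix (Fin n) (Fin n) ℂ,
        iteratedDeriv (d (i.val + 1)) (fun t : ℂ => sigmaMap n (B + t • M) i) 0 ≠ 0) := by
  intro i
  constructor
  · intro M k hk
    rw [hd] at hk
    exact part_one hF1 hb1 hblast hmono himage hgap B hB i M k hk
  · rw [hd]
    exact part_two hF1 B hB i
end
end

section
/- Let ψ ∈ M_n be a matrix whose only possibly nonzero entries are the superdiagonal entries ψ_{k−1,k} = f_k for 2 ≤ k ≤ n and the last-row entries ψ_{n,k} = ψ_{n+1−k} for 1 ≤ k ≤ n (so the last row is (ψ_n, ψ_{n−1}, …, ψ_2, ψ_1)). Then for every 1 ≤ i ≤ n, σ_i(ψ) = (−1)^{i+1} ψ_i ∏_{k=n−i+2}^{n} f_k. -/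
open Metric Set Polynomial

noncomputable section

lemma charmatrix_submatrix_inj {k l : ℕ} (ψ : Matrix (Fin k) (Fin k) ℂ)
    (g : Fin l → Fin k) (hg : Function.Injective g) :
    (Matrix.charmatrix ψ).submatrix g g = Matrix.charmatrix (ψ.submatrix g g) := by
  ext i j
  by_cases h : i = j
  · subst h; simp
  · rw [Matrix.submatrix_apply, Matrix.charmatrix_apply_ne _ _ _ (fun e => h (hg e)),
      Matrix.charmatrix_apply_ne _ _ _ h, Matrix.submatrix_apply]

lemma charpoly_companion_like :
    ∀ (n : ℕ) (f p : ℕ → ℂ) (ψ : Matrix (Fin n) (Fin n) ℂ),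
    (∀ i j : Fin n, ψ i j =
      if i.val + 1 = n then p (n - j.val)
      else if j.val = i.val + 1 then f (j.val + 1) else 0) →
    ψ.charpoly = X ^ n - ∑ i ∈ Finset.range n,
      C (p (i + 1) * ∏ k ∈ Finset.Icc (n - (i + 1) + 2) n, f k) * X ^ (n - (i + 1)) := by
  intro n
  induction n with
  | zero =>
    intro f p ψ h
    show (Matrix.charmatrix ψ).det = _
    simp [Matrix.det_isEmpty]
  | succ N IH =>
    intro f p ψ hψ
    obtain _ | m := N
    · -- 1×1 case
      show (Matrix.charmatrix ψ).det = _
      rw [Matrix.det_fin_one, Matrix.charmatrix_apply_eq, hψ]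
      rw [if_pos (by simp)]
      rw [Finset.sum_range_one]
      have : Finset.Icc (1 - (0+1) + 2) 1 = (∅ : Finset ℕ) := by
        apply Finset.Icc_eq_empty; omega
      simp [this]
    · -- size m+2
      show (Matrix.charmatrix ψ).det = _
      set M := Matrix.charmatrix ψ with hM
      -- column entries
      have hcol : ∀ i : Fin (m+2), i ≠ 0 → i ≠ Fin.last (m+1) → M i 0 = 0 := by
        intro i h0 hl
        have hlt : i.val < m + 1 := by
          rcases lt_or_eq_of_le (Nat.lt_succ_iff.mp i.is_lt) with h | h
          · exact h
          · exact absurd (Fin.ext h : i = Fin.last (m+1)) hl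
        have hc1 : ¬ (i.val + 1 = m + 1 + 1) := by omega
        have hc2 : ¬ ((0 : Fin (m+2)).val = i.val + 1) := by simp
        rw [hM, Matrix.charmatrix_apply_ne _ _ _ h0, hψ, if_neg hc1, if_neg hc2]
        simp
      have h00 : M 0 0 = X := by
        have hc1 : ¬ ((0 : Fin (m+2)).val + 1 = m + 1 + 1) := by simp
        have hc2 : ¬ ((0 : Fin (m+2)).val = (0 : Fin (m+2)).val + 1) := by simp
        rw [hM, Matrix.charmatrix_apply_eq, hψ, if_neg hc1, if_neg hc2]
        simp
      have hlast0 : M (Fin.last (m+1)) 0 = -C (p (m+2)) := by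
        have hne : (Fin.last (m+1) : Fin (m+2)) ≠ 0 := by simp [Fin.ext_iff]
        have hc1 : (Fin.last (m+1) : Fin (m+2)).val + 1 = m + 1 + 1 := by simp
        rw [hM, Matrix.charmatrix_apply_ne _ _ _ hne, hψ, if_pos hc1]
        simp
      -- the last minor is lower triangular
      have hdiag : ∀ i : Fin (m+1),
          (M.submatrix Fin.castSucc Fin.succ) i i = -C (f (i.val + 2)) := by
        intro i
        have h1 : (Fin.castSucc i : Fin (m+2)) ≠ Fin.succ i := by
          simp [Fin.ext_iff]
        have hc1 : ¬ ((Fin.castSucc i : Fin (m+2)).val + 1 = m + 1 + 1) := by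
          have := i.is_lt; simp only [Fin.coe_castSucc]; omega
        have hc2 : (Fin.succ i : Fin (m+2)).val = (Fin.castSucc i : Fin (m+2)).val + 1 := by
          simp
        rw [Matrix.submatrix_apply, hM, Matrix.charmatrix_apply_ne _ _ _ h1, hψ,
          if_neg hc1, if_pos hc2]
        simp
      have ht : (M.submatrix Fin.castSucc Fin.succ).BlockTriangular OrderDual.toDual := by
        intro i j hij
        have hij' : (i : ℕ) < (j : ℕ) := hij
        have h1 : (Fin.castSucc i : Fin (m+2)) ≠ Fin.succ j := by
          rw [Ne, Fin.ext_iff]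
          simp only [Fin.coe_castSucc, Fin.val_succ]; omega
        have hc1 : ¬ ((Fin.castSucc i : Fin (m+2)).val + 1 = m + 1 + 1) := by
          have := i.is_lt; simp only [Fin.coe_castSucc]; omega
        have hc2 : ¬ ((Fin.succ j : Fin (m+2)).val = (Fin.castSucc i : Fin (m+2)).val + 1) := by
          simp only [Fin.val_succ, Fin.coe_castSucc]; omega
        rw [Matrix.submatrix_apply, hM, Matrix.charmatrix_apply_ne _ _ _ h1, hψ,
          if_neg hc1, if_neg hc2]
        simp
      have hIccProd : ∏ k ∈ Finset.Icc 2 (m+2), f k = ∏ i ∈ Finset.range (m+1), f (i+2) := by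
        rw [← Finset.Ico_add_one_right_eq_Icc, Finset.prod_Ico_eq_prod_range]
        have h : m + 2 + 1 - 2 = m + 1 := by omega
        rw [h]
        exact Finset.prod_congr rfl fun i _ => by rw [Nat.add_comm]
      have hLdet : (M.submatrix Fin.castSucc Fin.succ).det =
          (-1)^(m+1) * C (∏ k ∈ Finset.Icc 2 (m+2), f k) := by
        rw [Matrix.det_of_lowerTriangular _ ht]
        calc ∏ i : Fin (m+1), (M.submatrix Fin.castSucc Fin.succ) i i
            = ∏ i : Fin (m+1), (-1) * C (f (i.val + 2)) := by
              exact Finset.prod_congr rfl fun i _ => by rw [hdiag i, neg_one_mul]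
          _ = (-1)^(m+1) * C (∏ k ∈ Finset.Icc 2 (m+2), f k) := by
              rw [Finset.prod_mul_distrib, Finset.prod_const, Finset.card_univ,
                Fintype.card_fin, hIccProd, map_prod]
              congr 1
              rw [Fin.prod_univ_eq_prod_range (fun i => C (f (i + 2))) (m+1)]
      -- the first minor via IH
      have hsub : ∀ i j : Fin (m+1), (ψ.submatrix Fin.succ Fin.succ) i j =
          if i.val + 1 = m + 1 then p ((m+1) - j.val)
          else if j.val = i.val + 1 then (fun k => f (k+1)) (j.val + 1) else 0 := by
        intro i j
        rw [Matrix.submatrix_apply, hψ]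
        simp only [Fin.val_succ]
        by_cases h : i.val + 1 = m + 1
        · rw [if_pos (by omega), if_pos h]
          congr 1
          omega
        · rw [if_neg (by omega), if_neg h]
          by_cases h2 : j.val = i.val + 1
          · rw [if_pos (by omega), if_pos h2]
          · rw [if_neg (by omega), if_neg h2]
      have hIH := IH (fun k => f (k+1)) p (ψ.submatrix Fin.succ Fin.succ) hsub
      have hfirstminor : (M.submatrix Fin.succ Fin.succ).det =
          X ^ (m+1) - ∑ i ∈ Finset.range (m+1),
            C (p (i + 1) * ∏ k ∈ Finset.Icc ((m+2) - (i + 1) + 2) (m+2), f k)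
              * X ^ ((m+1) - (i + 1)) := by
        rw [hM, charmatrix_submatrix_inj ψ Fin.succ (Fin.succ_injective _)]
        rw [show (Matrix.charmatrix (ψ.submatrix Fin.succ Fin.succ)).det
            = (ψ.submatrix Fin.succ Fin.succ).charpoly from rfl, hIH]
        congr 1
        apply Finset.sum_congr rfl
        intro i hi
        have hi' : i < m + 1 := Finset.mem_range.1 hi
        congr 2
        have hA : (m+2) - (i+1) + 2 = ((m+1) - (i+1) + 2) + 1 := by omega
        rw [hA, ← Finset.map_add_right_Icc _ _ 1, Finset.prod_map]
        rfl
      -- expand determinant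
      rw [Matrix.det_succ_column_zero, Fin.sum_univ_succ, Fin.sum_univ_castSucc]
      have hmid : ∑ i : Fin m, ((-1:ℂ[X]) ^ (((i.castSucc.succ : Fin (m+2))) : ℕ)
          * M i.castSucc.succ 0
          * (M.submatrix i.castSucc.succ.succAbove Fin.succ).det) = 0 := by
        apply Finset.sum_eq_zero
        intro i _
        have hne : (Fin.succ (Fin.castSucc i) : Fin (m+2)) ≠ Fin.last (m+1) := by
          rw [Ne, Fin.ext_iff]
          simp only [Fin.val_succ, Fin.coe_castSucc, Fin.val_last]
          have := i.is_lt; omega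
        rw [hcol _ (Fin.succ_ne_zero _) hne]
        ring
      rw [hmid, Fin.succ_last]
      rw [Fin.succAbove_zero, Fin.succAbove_last, h00, hlast0, hLdet, hfirstminor]
      simp only [Fin.val_zero, pow_zero, one_mul, Fin.val_last, add_zero,
        Nat.succ_eq_add_one, show m + 1 + 1 = m + 2 from rfl]
      -- now pure algebra
      conv_rhs => rw [Finset.sum_range_succ]
      have hlastterm : C (p (m + 1 + 1) * ∏ k ∈ Finset.Icc ((m+2) - (m+1+1) + 2) (m+2), f k)
          * X ^ ((m+2) - (m+1+1))
          = C (p (m+2)) * C (∏ k ∈ Finset.Icc 2 (m+2), f k) := by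
        have h1 : (m+2) - (m+1+1) + 2 = 2 := by omega
        have h2 : (m+2) - (m+1+1) = 0 := by omega
        rw [h1, h2, pow_zero, mul_one, map_mul]
      rw [hlastterm]
      have hsumshift : ∑ i ∈ Finset.range (m+1),
          C (p (i + 1) * ∏ k ∈ Finset.Icc ((m+2) - (i + 1) + 2) (m+2), f k)
            * X ^ ((m+2) - (i + 1))
          = X * ∑ i ∈ Finset.range (m+1),
          C (p (i + 1) * ∏ k ∈ Finset.Icc ((m+2) - (i + 1) + 2) (m+2), f k)
            * X ^ ((m+1) - (i + 1)) := by
        rw [Finset.mul_sum]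
        apply Finset.sum_congr rfl
        intro i hi
        have hi' : i < m + 1 := Finset.mem_range.1 hi
        have he : (m+2) - (i+1) = ((m+1) - (i+1)) + 1 := by omega
        rw [he, pow_succ]
        ring
      rw [hsumshift]
      have hsign : ((-1:ℂ[X]) ^ (m+1)) * (-C (p (m+2))) * ((-1:ℂ[X])^(m+1)
          * C (∏ k ∈ Finset.Icc 2 (m+2), f k))
          = -(C (p (m+2)) * C (∏ k ∈ Finset.Icc 2 (m+2), f k)) := by
        have : ((-1:ℂ[X]) ^ (m+1)) * ((-1:ℂ[X]) ^ (m+1)) = 1 := by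
          rw [← pow_add]
          exact Even.neg_one_pow ⟨m+1, rfl⟩
        calc ((-1:ℂ[X]) ^ (m+1)) * (-C (p (m+2))) * ((-1:ℂ[X])^(m+1)
              * C (∏ k ∈ Finset.Icc 2 (m+2), f k))
            = (((-1:ℂ[X]) ^ (m+1)) * ((-1:ℂ[X]) ^ (m+1)))
              * (-(C (p (m+2)) * C (∏ k ∈ Finset.Icc 2 (m+2), f k))) := by ring
          _ = _ := by rw [this, one_mul]
      rw [hsign]
      have hpow : (X : ℂ[X]) * X ^ (m+1) = X ^ (m+2) := by
        rw [← pow_succ']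
      rw [← hpow]
      ring

theorem sigma_of_companion_like' (n : ℕ) (f p : ℕ → ℂ)
    (ψ : Matrix (Fin n) (Fin n) ℂ)
    (hψ : ∀ i j : Fin n, ψ i j =
      if i.val + 1 = n then p (n - j.val)
      else if j.val = i.val + 1 then f (j.val + 1) else 0) :
    ∀ i : Fin n, (-1 : ℂ) ^ (i.val + 1) * ψ.charpoly.coeff (n - (i.val + 1)) =
      (-1 : ℂ) ^ (i.val + 1 + 1) * p (i.val + 1) *
        ∏ k ∈ Finset.Icc (n - (i.val + 1) + 2) n, f k := by
  intro i
  have key := charpoly_companion_like n f p ψ hψ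
  have hi : i.val + 1 ≤ n := i.is_lt
  rw [key, coeff_sub, coeff_X_pow, if_neg (by omega), finset_sum_coeff]
  rw [Finset.sum_eq_single i.val]
  · rw [coeff_C_mul, coeff_X_pow, if_pos rfl, pow_succ]
    ring
  · intro j hj hne
    rw [coeff_C_mul, coeff_X_pow, if_neg (by
      have := Finset.mem_range.1 hj
      omega), mul_zero]
  · intro h
    exact absurd (Finset.mem_range.2 i.is_lt) h

/-- for a matrix `ψ` whose only possibly nonzero entries are the
superdiagonal entries `ψ_{k-1,k} = f k` (`2 ≤ k ≤ n`) and the last row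
`(ψ_n, ψ_{n-1}, …, ψ_1)` (1-based indices), one has
`σ_i(ψ) = (-1)^(i+1) ψ_i ∏_{k=n-i+2}^n f k`. -/
theorem sigma_of_companion_like (n : ℕ) (f p : ℕ → ℂ)
    (ψ : Matrix (Fin n) (Fin n) ℂ)
    (hψ : ∀ i j : Fin n, ψ i j =
      if i.val + 1 = n then p (n - j.val)
      else if j.val = i.val + 1 then f (j.val + 1) else 0) :
    ∀ i : Fin n, sigmaMap n ψ i =
      (-1 : ℂ) ^ (i.val + 1 + 1) * p (i.val + 1) *
        ∏ k ∈ Finset.Icc (n - (i.val + 1) + 2) n, f k := by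
  intro i
  exact sigma_of_companion_like' n f p ψ hψ i
end
end
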